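/- arXiv:2106.00114 — 7 statements merged into one kernel-verified Lean document; each statement's English description precedes it below -/
import Mathlib

section
/- Let ν be a probability measure on a standard Borel space (S, B), G ⊆ B a sub-σ-field, and K a regular conditional distribution for ν given G. Then there exists a set F ∈ σ(K) with ν(F) = 1 such that K(x)(B) = δ_x(B) for every B ∈ σ(K) and every x ∈ F, where δ_x denotes the unit mass at x. -/
open MeasureTheory ProbabilityTheory Filter Set ENNReal NNReal

noncomputable section

variable {Ω S : Type*}

/-- `K` is a regular conditional distribution for `ν` given the sub-σ-field `G`. -/
def IsRCD [mS : MeasurableSpace S] (ν : Measure S) (K : S → Measure S)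
    (G : MeasurableSpace S) : Prop :=
  G ≤ mS ∧ @Measurable S (@Measure S mS) mS inferInstance K ∧
    (∀ x, IsProbabilityMeasure (K x)) ∧
    (∀ A : Set S, MeasurableSet[mS] A → Measurable[G] fun x => K x A) ∧
    (∀ A : Set S, MeasurableSet[mS] A → ∀ g : Set S, MeasurableSet[G] g →
      ν (A ∩ g) = ∫⁻ x in g, K x A ∂ν)

/-- `σ(X_0, …, X_{n-1})`, the σ-field generated by the first `n` variables. -/
def Filtr [mS : MeasurableSpace S] (X : ℕ → Ω → S) (n : ℕ) : MeasurableSpace Ω :=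
  ⨆ i : Fin n, mS.comap (X i)

/-- The predictive probability `(θ ν(A) + ∑_{i<n} K(X_i)(A)) / (n + θ)`. -/
def predReal [MeasurableSpace S] (X : ℕ → Ω → S) (ν : Measure S) (θ : ℝ)
    (K : S → Measure S) (n : ℕ) (ω : Ω) (A : Set S) : ℝ :=
  (θ * (ν A).toReal + ∑ i ∈ Finset.range n, (K (X i ω) A).toReal) / (n + θ)

/-- Condition (1.1): `X_1 ∼ ν` and the predictive distributions are
`(θ ν + ∑_{i≤n} K(X_i))/(n+θ)`. -/
def Cond11 [MeasurableSpace Ω] [MeasurableSpace S] (P : Measure Ω) (X : ℕ → Ω → S)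
    (ν : Measure S) (θ : ℝ) (K : S → Measure S) : Prop :=
  (∀ n, Measurable (X n)) ∧ P.map (X 0) = ν ∧
    ∀ n : ℕ, 1 ≤ n → ∀ A : Set S, MeasurableSet A →
      P[((X n) ⁻¹' A).indicator (fun _ => (1 : ℝ)) | Filtr X n]
        =ᵐ[P] fun ω => predReal X ν θ K n ω A

/-- `X ∈ L`: condition (1.1) holds and `K` is an r.c.d. for `ν` given some sub-σ-field. -/
def MemL [MeasurableSpace Ω] [mS : MeasurableSpace S] (P : Measure Ω) (X : ℕ → Ω → S)
    (ν : Measure S) (θ : ℝ) (K : S → Measure S) : Prop :=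
  Cond11 P X ν θ K ∧ ∃ G : MeasurableSpace S, IsRCD (mS := mS) ν K G

/-- `μ` is a random probability measure directing `X`:
`μ(A) = lim_n (1/n) ∑_{i≤n} 1_A(X_i)` a.s. for every `A`. -/
def IsDirecting [MeasurableSpace Ω] [MeasurableSpace S] (P : Measure Ω) (X : ℕ → Ω → S)
    (μ : Ω → Measure S) : Prop :=
  Measurable μ ∧ (∀ ω, IsProbabilityMeasure (μ ω)) ∧
    ∀ A : Set S, MeasurableSet A →
      ∀ᵐ ω ∂P, Tendsto
        (fun n : ℕ => (∑ i ∈ Finset.range n, A.indicator (fun _ => (1 : ℝ)) (X i ω)) / n)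
        atTop (nhds ((μ ω A).toReal))

/-- Exchangeability of the sequence `X`. -/
def Exchangeable [MeasurableSpace Ω] [MeasurableSpace S] (P : Measure Ω)
    (X : ℕ → Ω → S) : Prop :=
  ∀ n : ℕ, ∀ τ : Equiv.Perm (Fin n),
    P.map (fun ω (i : Fin n) => X (τ i) ω) = P.map (fun ω (i : Fin n) => X i ω)

/-- The Beta(1, θ) law on ℝ, with density `w ↦ θ (1-w)^(θ-1)` on `(0,1)`. -/
def betaOneMeasure (θ : ℝ) : Measure ℝ :=
  (volume : Measure ℝ).withDensity
    ((Set.Ioo (0 : ℝ) 1).indicator fun w => ENNReal.ofReal (θ * (1 - w) ^ (θ - 1)))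

/-- `σ` is the stick-breaking law with parameter `θ` on sequences:
the law of `(T_n)` where `T_n = W_n ∏_{i<n} (1 - W_i)` and `(W_n)` is i.i.d. Beta(1, θ). -/
def IsStickBreakingLaw (θ : ℝ) (σ : Measure (ℕ → ℝ)) : Prop :=
  ∃ (Ω' : Type) (_ : MeasurableSpace Ω') (Q : Measure Ω') (W : ℕ → Ω' → ℝ),
    IsProbabilityMeasure Q ∧ (∀ n, Measurable (W n)) ∧
    iIndepFun W Q ∧ (∀ n, Q.map (W n) = betaOneMeasure θ) ∧
    σ = Q.map fun ω' (j : ℕ) => W j ω' * ∏ i ∈ Finset.range j, (1 - W i ω')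

/-- `(V_n)` has the stick-breaking distribution with parameter `θ`. -/
def IsStickBreaking [MeasurableSpace Ω] (P : Measure Ω) (θ : ℝ) (V : ℕ → Ω → ℝ) : Prop :=
  ∃ σ : Measure (ℕ → ℝ), IsStickBreakingLaw θ σ ∧ P.map (fun ω (j : ℕ) => V j ω) = σ

/-- The random measure `∑_j V_j K(Z_j)`. -/
def mixSum [MeasurableSpace S] (K : S → Measure S) (V : ℕ → Ω → ℝ) (Z : ℕ → Ω → S)
    (ω : Ω) : Measure S :=
  Measure.sum fun j => ENNReal.ofReal (V j ω) • K (Z j ω)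

/-- `σ(K)`: the sub-σ-field of `S` generated by the kernel `K`. -/
def sigmaK [mS : MeasurableSpace S] (K : S → Measure S) : MeasurableSpace S :=
  MeasurableSpace.comap K inferInstance

/-- `γ` is the `p`-dimensional Gaussian law `N_p(0, M)`: every linear functional
`y ↦ ∑ i, b i * y i` has the one-dimensional Gaussian law with mean `0` and
variance `bᵀ M b`. -/
def IsGaussN {p : ℕ} (M : Matrix (Fin p) (Fin p) ℝ)
    (γ : Measure (EuclideanSpace ℝ (Fin p))) : Prop :=
  ∀ b : Fin p → ℝ,
    γ.map (fun y => ∑ i, b i * y i) =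
      gaussianReal 0 (Real.toNNReal (∑ i, ∑ j, b i * M i j * b j))

/-- The matrix of second moments `(∫ y_i y_j dλ)_{i,j}` of a measure `λ` on `ℝ^p`. -/
def covMatrix {p : ℕ} (lam : Measure (EuclideanSpace ℝ (Fin p))) :
    Matrix (Fin p) (Fin p) ℝ :=
  Matrix.of fun i j => ∫ y, y i * y j ∂lam

/-- The σ-field of measurable sets invariant under every `f i`. -/
def invariantSigma {ι : Type*} [mS : MeasurableSpace S] (f : ι → S → S) :
    MeasurableSpace S where
  MeasurableSet' A := MeasurableSet[mS] A ∧ ∀ i, f i ⁻¹' A = A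
  measurableSet_empty := ⟨MeasurableSet.empty, fun _ => Set.preimage_empty⟩
  measurableSet_compl A hA := ⟨hA.1.compl, fun i => by rw [Set.preimage_compl, hA.2 i]⟩
  measurableSet_iUnion g hg := ⟨MeasurableSet.iUnion fun k => (hg k).1,
    fun i => by rw [Set.preimage_iUnion]; exact Set.iUnion_congr fun k => (hg k).2 i⟩

/-- Auxiliary σ-field generated by the evaluations `x ↦ K x (g t)`. -/
def auxM0 {S : Type*} (mS : MeasurableSpace S) (K : S → @Measure S mS)
    (g : Finset ℕ → Set S) : MeasurableSpace S :=
  ⨆ t : Finset ℕ, MeasurableSpace.comap (fun x => K x (g t)) inferInstance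

open MeasurableSpace in
lemma aux_exists_piSystem {α : Type*} {b : Set (Set α)} (hb : b.Countable) :
    ∃ P : Set (Set α), P.Countable ∧ IsPiSystem P ∧
      MeasurableSpace.generateFrom P = MeasurableSpace.generateFrom b := by
  classical
  set e : ℕ → Set α := Set.enumerateCountable (hb.insert Set.univ) Set.univ with he
  have hrange : Set.range e = insert Set.univ b :=
    Set.range_enumerateCountable_of_mem _ (Set.mem_insert _ _)
  refine ⟨Set.range (fun t : Finset ℕ => ⋂ i ∈ t, e i), Set.countable_range _, ?_, ?_⟩
  · rintro s ⟨ts, rfl⟩ t ⟨tt, rfl⟩ -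
    refine ⟨ts ∪ tt, ?_⟩
    ext x
    simp [Finset.mem_union, or_imp, forall_and]
  · have huniv : generateFrom b = generateFrom (insert Set.univ b) :=
      (generateFrom_insert_univ b).symm
    apply le_antisymm
    · refine generateFrom_le ?_
      rintro s ⟨t, rfl⟩
      rw [huniv, ← hrange]
      exact t.measurableSet_biInter fun i _ => measurableSet_generateFrom ⟨i, rfl⟩
    · rw [huniv, ← hrange]
      refine generateFrom_le ?_
      rintro s ⟨i, rfl⟩
      exact measurableSet_generateFrom ⟨{i}, by simp⟩

theorem stmt_0 {S : Type*} [mS : MeasurableSpace S] [StandardBorelSpace S]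
    (ν : Measure S) [IsProbabilityMeasure ν] (K : S → Measure S)
    (hK : ∃ G : MeasurableSpace S, IsRCD (mS := mS) ν K G) :
    ∃ F : Set S, MeasurableSet[sigmaK K] F ∧ ν F = 1 ∧
      ∀ B : Set S, MeasurableSet[sigmaK K] B → ∀ x ∈ F, K x B = Measure.dirac x B := by
  classical
  obtain ⟨G, hGle, hKm, hKp, hGm, hcond⟩ := hK
  have hskG : @sigmaK S mS K ≤ G :=
    Measurable.comap_le (@Measure.measurable_of_measurable_coe S S mS G K hGm)
  have hcond' : ∀ A : Set S, MeasurableSet[mS] A → ∀ t : Set S,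
      MeasurableSet[@sigmaK S mS K] t → ν (A ∩ t) = ∫⁻ x in t, K x A ∂ν :=
    fun A hA t ht => hcond A hA t (hskG t ht)
  clear hcond hGm hGle hskG
  clear G
  haveI : ∀ x, IsProbabilityMeasure (K x) := hKp
  -- basic facts about sigmaK
  have hKsk : @Measurable S (Measure S) (sigmaK K) _ K := Measurable.of_comap_le le_rfl
  have hsk_le : sigmaK (mS := mS) K ≤ mS := hKm.comap_le
  -- countable generation of sigmaK
  set g : Finset ℕ → Set S := fun t => ⋂ i ∈ t, MeasurableSpace.natGeneratingSequence S i
    with hg_def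
  have hg_meas : ∀ t, MeasurableSet[mS] (g t) := fun t =>
    t.measurableSet_biInter fun i _ => MeasurableSpace.measurableSet_natGeneratingSequence i
  have hg_gen : mS = MeasurableSpace.generateFrom (Set.range g) := by
    apply le_antisymm
    · conv_lhs => rw [← MeasurableSpace.generateFrom_natGeneratingSequence S]
      refine MeasurableSpace.generateFrom_le ?_
      rintro s ⟨i, rfl⟩
      exact MeasurableSpace.measurableSet_generateFrom ⟨{i}, by simp [hg_def]⟩
    · exact MeasurableSpace.generateFrom_le fun s ⟨t, ht⟩ => ht ▸ hg_meas t
  have hg_pi : IsPiSystem (Set.range g) := by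
    rintro s ⟨ts, rfl⟩ t ⟨tt, rfl⟩ -
    refine ⟨ts ∪ tt, ?_⟩
    simp only [hg_def]
    ext x
    simp [Finset.mem_union, or_imp, forall_and]
  have claimA : ∀ s : Set S, MeasurableSet[mS] s →
      Measurable[(auxM0 mS K g)] (fun x => K x s) := by
    intro s hs
    refine MeasurableSpace.induction_on_inter (m := mS)
      (C := fun s _ => Measurable[(auxM0 mS K g)] fun x => K x s) hg_gen hg_pi ?_ ?_ ?_ ?_ _ hs
    · simp only [measure_empty]; exact measurable_const
    · rintro t ⟨u, rfl⟩
      exact Measurable.of_comap_le (le_iSup (fun t : Finset ℕ =>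
        MeasurableSpace.comap (fun x => K x (g t)) inferInstance) u)
    · intro t ht hC
      have : (fun x => K x tᶜ) = fun x => 1 - K x t := by
        funext x
        rw [measure_compl ht (measure_ne_top _ _), measure_univ]
      rw [this]
      exact measurable_const.sub hC
    · intro f hd hm hC
      have : (fun x => K x (⋃ i, f i)) = fun x => ∑' i, K x (f i) := by
        funext x; exact measure_iUnion hd hm
      rw [this]
      exact Measurable.ennreal_tsum hC
  have hsk_eq : sigmaK (mS := mS) K = (auxM0 mS K g) := by
    apply le_antisymm
    · exact Measurable.comap_le (@Measure.measurable_of_measurable_coe S S mS (auxM0 mS K g) K claimA)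
    · refine iSup_le fun t => ?_
      exact ((Measure.measurable_coe (hg_meas t)).comp hKsk).comap_le
  -- sigmaK is generated by a countable set
  obtain ⟨P, hPc, hPpi, hPgen⟩ :
      ∃ P : Set (Set S), P.Countable ∧ IsPiSystem P ∧
        MeasurableSpace.generateFrom P = sigmaK (mS := mS) K := by
    have hE : (inferInstance : MeasurableSpace ℝ≥0∞) =
        MeasurableSpace.generateFrom (MeasurableSpace.countableGeneratingSet ℝ≥0∞) :=
      (MeasurableSpace.generateFrom_countableGeneratingSet).symm
    set b : Set (Set S) := ⋃ t : Finset ℕ,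
      Set.preimage (fun x => K x (g t)) '' MeasurableSpace.countableGeneratingSet ℝ≥0∞
      with hb_def
    have hb_c : b.Countable := Set.countable_iUnion fun t =>
      (MeasurableSpace.countable_countableGeneratingSet).image _
    have hcomap : ∀ t : Finset ℕ,
        MeasurableSpace.comap (fun x => K x (g t)) (inferInstance : MeasurableSpace ℝ≥0∞) =
          MeasurableSpace.generateFrom
            (Set.preimage (fun x => K x (g t)) ''
              MeasurableSpace.countableGeneratingSet ℝ≥0∞) := fun t => by
      conv_lhs => rw [hE]
      rw [MeasurableSpace.comap_generateFrom]
    have heq : sigmaK (mS := mS) K = MeasurableSpace.generateFrom b := by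
      rw [hsk_eq, hb_def, ← MeasurableSpace.iSup_generateFrom]
      rw [auxM0]
      exact iSup_congr hcomap
    obtain ⟨P, hPc, hPpi, hPg⟩ := aux_exists_piSystem hb_c
    exact ⟨P, hPc, hPpi, hPg.trans heq.symm⟩
  -- the sets D B and F
  have evalB : ∀ B : Set S, MeasurableSet[mS] B →
      Measurable[sigmaK (mS := mS) K] fun x => K x B := fun B hB =>
    (Measure.measurable_coe hB).comp hKsk
  have evalB_mS : ∀ B : Set S, MeasurableSet[mS] B →
      Measurable[mS] fun x => K x B := fun B hB =>
    (Measure.measurable_coe hB).comp hKm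
  set D : Set S → Set S := fun B => {x | K x B = Measure.dirac x B} with hD_def
  have hD_meas : ∀ B : Set S, MeasurableSet[sigmaK (mS := mS) K] B →
      MeasurableSet[sigmaK (mS := mS) K] (D B) := by
    intro B hB
    have hBm : MeasurableSet[mS] B := hsk_le _ hB
    have : D B = (B ∩ (fun x => K x B) ⁻¹' {1}) ∪ (Bᶜ ∩ (fun x => K x B) ⁻¹' {0}) := by
      ext x
      by_cases hx : x ∈ B <;>
        simp [hD_def, Measure.dirac_apply' x hBm, Set.indicator, hx]
    rw [this]
    exact ((hB.inter (evalB B hBm (measurableSet_singleton 1))).union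
      (hB.compl.inter (evalB B hBm (measurableSet_singleton 0))))
  have hD_ae : ∀ B : Set S, MeasurableSet[sigmaK (mS := mS) K] B → ∀ᵐ x ∂ν, x ∈ D B := by
    intro B hB
    have hBm : MeasurableSet[mS] B := hsk_le _ hB
    have h1 : ∀ᵐ x ∂ν, x ∈ B → K x B = 1 := by
      have e1 : ν B = ∫⁻ x in B, K x B ∂ν := by
        simpa [Set.inter_self] using hcond' B hBm B hB
      have hfin : ∫⁻ x in B, K x B ∂ν ≠ ∞ := by
        rw [← e1]; exact measure_ne_top ν B
      have hzero : ∫⁻ x in B, (1 - K x B) ∂ν = 0 := by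
        rw [lintegral_sub (evalB_mS B hBm) hfin
          (Filter.Eventually.of_forall fun x => prob_le_one), setLIntegral_one, ← e1,
          tsub_self]
      have haez := (setLIntegral_eq_zero_iff hBm
        (measurable_const.sub (evalB_mS B hBm))).mp hzero
      refine haez.mono fun x hx hxB => ?_
      exact le_antisymm prob_le_one (tsub_eq_zero_iff_le.mp (hx hxB))
    have h0 : ∀ᵐ x ∂ν, x ∉ B → K x B = 0 := by
      have e0 : (0 : ℝ≥0∞) = ∫⁻ x in Bᶜ, K x B ∂ν := by
        simpa [Set.inter_compl_self] using hcond' B hBm Bᶜ hB.compl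
      have haez := (setLIntegral_eq_zero_iff hBm.compl (evalB_mS B hBm)).mp e0.symm
      exact haez
    refine (h1.and h0).mono fun x ⟨hx1, hx0⟩ => ?_
    show K x B = Measure.dirac x B
    by_cases hx : x ∈ B
    · rw [hx1 hx, Measure.dirac_apply' x hBm]; simp [hx]
    · rw [hx0 hx, Measure.dirac_apply' x hBm]; simp [hx]
  refine ⟨⋂ B ∈ P, D B, ?_, ?_, ?_⟩
  · exact MeasurableSet.biInter hPc fun B hB =>
      hD_meas B (hPgen ▸ MeasurableSpace.measurableSet_generateFrom hB)
  · have hae : ∀ᵐ x ∂ν, ∀ B ∈ P, x ∈ D B :=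
      (MeasureTheory.ae_ball_iff hPc).2 fun B hB =>
        hD_ae B (hPgen ▸ MeasurableSpace.measurableSet_generateFrom hB)
    have hFm : MeasurableSet[mS] (⋂ B ∈ P, D B) :=
      hsk_le _ (MeasurableSet.biInter hPc fun B hB =>
        hD_meas B (hPgen ▸ MeasurableSpace.measurableSet_generateFrom hB))
    rw [← prob_compl_eq_zero_iff hFm]
    have : (⋂ B ∈ P, D B)ᶜ = {x | ¬ ∀ B ∈ P, x ∈ D B} := by
      ext x; simp [Set.mem_iInter]
    rw [this]
    exact hae
  · intro B hB x hx
    have hx' : ∀ B ∈ P, x ∈ D B := Set.mem_iInter₂.mp hx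
    refine MeasurableSpace.induction_on_inter (m := sigmaK (mS := mS) K)
      (C := fun B _ => K x B = Measure.dirac x B) hPgen.symm hPpi ?_ ?_ ?_ ?_ _ hB
    · simp
    · intro t ht; exact hx' t ht
    · intro t ht hC
      have htm : MeasurableSet[mS] t := hsk_le _ ht
      rw [measure_compl htm (measure_ne_top _ _), measure_compl htm (measure_ne_top _ _),
        measure_univ, measure_univ, hC]
    · intro f hd hm hC
      have hfm : ∀ i, MeasurableSet[mS] (f i) := fun i => hsk_le _ (hm i)
      rw [measure_iUnion hd hfm, measure_iUnion hd hfm]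
      exact tsum_congr hC

end
end

section
/- Let ν be a probability measure on a standard Borel space (S, B) and K a regular conditional distribution for ν given a sub-σ-field G ⊆ B. Then there exists a set F ∈ σ(K) with ν(F) = 1 such that ∫_A K(y)(B) K(x)(dy) = K(x)(A) · K(x)(B) for every x ∈ F and all A, B ∈ B. -/
open MeasureTheory ProbabilityTheory Filter Set ENNReal NNReal

noncomputable section

variable {Ω S : Type*}

section RCDHelpers

variable {S : Type*} {G : MeasurableSpace S} [mS : MeasurableSpace S] {K : S → Measure S}
  {ν : Measure S}

/-- For any `mS`-measurable `g`, the map `x ↦ ∫⁻ g d(K x)` is `G`-measurable. -/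
lemma rcd_lintegral_G_meas
    (hKG : ∀ A : Set S, MeasurableSet[mS] A → Measurable[G] fun x => K x A)
    {g : S → ℝ≥0∞} (hg : Measurable g) :
    Measurable[G] fun x => ∫⁻ y, g y ∂(K x) := by
  refine @Measurable.ennreal_induction S mS
    (fun g => Measurable[G] fun x => ∫⁻ y, g y ∂(K x)) ?_ ?_ ?_ g hg
  · intro c s hs
    simp_rw [lintegral_indicator hs, setLIntegral_const]
    exact (hKG s hs).const_mul c
  · intro f g hfg hf hg Pf Pg
    simp_rw [Pi.add_apply, lintegral_add_left hf]
    exact Pf.add Pg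
  · intro f hf hmono Pf
    simp_rw [lintegral_iSup hf hmono]
    exact Measurable.iSup Pf

lemma rcd_bind_restrict (hKmeas : Measurable K)
    (hrcd : ∀ A : Set S, MeasurableSet[mS] A → ∀ g : Set S, MeasurableSet[G] g →
      ν (A ∩ g) = ∫⁻ x in g, K x A ∂ν)
    {s : Set S} (hs : MeasurableSet[G] s) :
    ((ν.restrict s).bind K) = ν.restrict s := by
  refine Measure.ext fun A hA => ?_
  rw [Measure.bind_apply hA hKmeas.aemeasurable, ← hrcd A hA s hs, Measure.restrict_apply hA]

lemma rcd_setLIntegral (hKmeas : Measurable K)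
    (hrcd : ∀ A : Set S, MeasurableSet[mS] A → ∀ g : Set S, MeasurableSet[G] g →
      ν (A ∩ g) = ∫⁻ x in g, K x A ∂ν)
    {g : S → ℝ≥0∞} (hg : Measurable g) {s : Set S} (hs : MeasurableSet[G] s) :
    ∫⁻ x in s, ∫⁻ y, g y ∂(K x) ∂ν = ∫⁻ x in s, g x ∂ν := by
  conv_rhs => rw [← rcd_bind_restrict hKmeas hrcd hs]
  rw [Measure.lintegral_bind hKmeas.aemeasurable hg.aemeasurable]

lemma rcd_mul_lintegral (hle : G ≤ mS) (hKmeas : Measurable K)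
    (hrcd : ∀ A : Set S, MeasurableSet[mS] A → ∀ g : Set S, MeasurableSet[G] g →
      ν (A ∩ g) = ∫⁻ x in g, K x A ∂ν)
    {ψ : S → ℝ≥0∞} (hψ : Measurable[G] ψ) {A : Set S} (hA : MeasurableSet[mS] A) :
    ∫⁻ x, ψ x * K x A ∂ν = ∫⁻ x in A, ψ x ∂ν := by
  have hKA : Measurable fun x => K x A := (Measure.measurable_coe hA).comp hKmeas
  refine @Measurable.ennreal_induction S G
    (fun ψ => ∫⁻ x, ψ x * K x A ∂ν = ∫⁻ x in A, ψ x ∂ν) ?_ ?_ ?_ ψ hψ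
  · intro c s hs
    have h1 : (fun x => s.indicator (fun _ => c) x * K x A)
          = fun x => s.indicator (fun x => c * K x A) x := by
        funext x; by_cases hx : x ∈ s <;> simp [hx]
    rw [h1, lintegral_indicator (hle s hs), lintegral_indicator (hle s hs),
      setLIntegral_const, Measure.restrict_apply (hle s hs),
      lintegral_const_mul c hKA,
      ← hrcd A hA s hs, Set.inter_comm A s]
  · intro f g hfg hf hg Pf Pg
    simp only [Pi.add_apply, add_mul]
    rw [lintegral_add_left (f := fun x => f x * K x A) ((hf.mono hle le_rfl).mul hKA),
      lintegral_add_left (hf.mono hle le_rfl), Pf, Pg]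
  · intro f hf hmono Pf
    have hmono' : Monotone fun n x => f n x * K x A :=
        fun m n h x => mul_le_mul_left (hmono h x) _
    simp_rw [ENNReal.iSup_mul]
    rw [lintegral_iSup (f := fun n x => f n x * K x A) (fun n => ((hf n).mono hle le_rfl).mul hKA) hmono',
      lintegral_iSup (fun n => (hf n).mono hle le_rfl) hmono]
    exact iSup_congr Pf

lemma rcd_ae_eq [IsProbabilityMeasure ν] (hle : G ≤ mS) (hKmeas : Measurable K)
    (hKG : ∀ A : Set S, MeasurableSet[mS] A → Measurable[G] fun x => K x A)
    (hrcd : ∀ A : Set S, MeasurableSet[mS] A → ∀ g : Set S, MeasurableSet[G] g →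
      ν (A ∩ g) = ∫⁻ x in g, K x A ∂ν)
    {A B : Set S} (hA : MeasurableSet A) (hB : MeasurableSet B) :
    (fun x => ∫⁻ y, A.indicator (fun y => K y B) y ∂(K x)) =ᵐ[ν]
      fun x => K x A * K x B := by
  have hfB : Measurable fun y => K y B := (Measure.measurable_coe hB).comp hKmeas
  have hg : Measurable (A.indicator fun y => K y B) := hfB.indicator hA
  have hφ : Measurable[G] fun x => ∫⁻ y, A.indicator (fun y => K y B) y ∂(K x) :=
    rcd_lintegral_G_meas hKG hg
  have hh : Measurable[G] fun x => K x A * K x B := (hKG A hA).mul (hKG B hB)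
  have key : ∀ s : Set S, MeasurableSet[G] s →
      ∫⁻ x in s, ∫⁻ y, A.indicator (fun y => K y B) y ∂(K x) ∂ν
        = ∫⁻ x in s, K x A * K x B ∂ν := by
    intro s hs
    rw [rcd_setLIntegral hKmeas hrcd hg hs]
    have hψ : Measurable[G] (s.indicator fun x => K x B) := (hKG B hB).indicator hs
    have h3 := rcd_mul_lintegral hle hKmeas hrcd hψ hA
    have e1 : ∫⁻ x in s, A.indicator (fun y => K y B) x ∂ν
        = ∫⁻ x in A ∩ s, K x B ∂ν := by
      rw [lintegral_indicator hA, Measure.restrict_restrict hA]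
    have hind : (fun x => s.indicator (fun x => K x B) x * K x A)
        = fun x => s.indicator (fun x => K x B * K x A) x := by
      funext x; by_cases hx : x ∈ s <;> simp [hx]
    rw [hind, lintegral_indicator (hle s hs)] at h3
    rw [lintegral_indicator (hle s hs), Measure.restrict_restrict (hle s hs),
      Set.inter_comm s A] at h3
    have e2 : ∫⁻ x in s, K x A * K x B ∂ν = ∫⁻ x in A ∩ s, K x B ∂ν := by
      rw [← h3]
      exact lintegral_congr fun x => mul_comm _ _
    rw [e1, e2]
  have trim_eq : ∀ (f : S → ℝ≥0∞), Measurable[G] f → ∀ s : Set S, MeasurableSet[G] s →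
      ∫⁻ x in s, f x ∂(ν.trim hle) = ∫⁻ x in s, f x ∂ν := by
    intro f hf s hs
    calc ∫⁻ x in s, f x ∂(ν.trim hle)
        = ∫⁻ x, s.indicator f x ∂(ν.trim hle) := (lintegral_indicator hs f).symm
      _ = ∫⁻ x, s.indicator f x ∂ν := lintegral_trim hle (hf.indicator hs)
      _ = ∫⁻ x in s, f x ∂ν := lintegral_indicator (hle s hs) f
  have htrim : (fun x => ∫⁻ y, A.indicator (fun y => K y B) y ∂(K x))
      =ᵐ[ν.trim hle] fun x => K x A * K x B := by
    refine ae_eq_of_forall_setLIntegral_eq_of_sigmaFinite hφ hh fun s hs _ => ?_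
    rw [trim_eq _ hφ s hs, trim_eq _ hh s hs]
    exact key s hs
  exact ae_eq_of_ae_eq_trim htrim

end RCDHelpers

lemma stmt_1_aux {S : Type*} {G : MeasurableSpace S} [mS : MeasurableSpace S]
    [StandardBorelSpace S] (ν : Measure S) [IsProbabilityMeasure ν] (K : S → Measure S)
    (hle : G ≤ mS) (hKmeas : Measurable K) (hKprob : ∀ x, IsProbabilityMeasure (K x))
    (hKG : ∀ A : Set S, MeasurableSet[mS] A → Measurable[G] fun x => K x A)
    (hrcd : ∀ A : Set S, MeasurableSet[mS] A → ∀ g : Set S, MeasurableSet[G] g →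
      ν (A ∩ g) = ∫⁻ x in g, K x A ∂ν) :
    ∃ F : Set S, MeasurableSet[sigmaK K] F ∧ ν F = 1 ∧
      ∀ x ∈ F, ∀ A B : Set S, MeasurableSet A → MeasurableSet B →
        ∫⁻ y in A, K y B ∂(K x) = K x A * K x B := by
  classical
  -- a countable π-system generating `mS`, containing `univ`
  set g0 : Set (Set S) := MeasurableSpace.countableGeneratingSet S with hg0
  have hg0c : g0.Countable := MeasurableSpace.countable_countableGeneratingSet
  have hg0gen : MeasurableSpace.generateFrom g0 = mS :=
    MeasurableSpace.generateFrom_countableGeneratingSet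
  set C : Set (Set S) := Set.sInter '' {t | t.Finite ∧ t ⊆ g0} with hCdef
  have hCc : C.Countable := (Set.countable_setOf_finite_subset hg0c).image _
  have hCuniv : Set.univ ∈ C :=
    ⟨∅, ⟨Set.finite_empty, Set.empty_subset _⟩, Set.sInter_empty⟩
  have hCmeas : ∀ s ∈ C, MeasurableSet s := by
    rintro s ⟨t, ⟨htf, htg⟩, rfl⟩
    exact htf.measurableSet_sInter fun u hu =>
      MeasurableSpace.measurableSet_countableGeneratingSet (htg hu)
  have hCpi : IsPiSystem C := by
    rintro s ⟨t1, ⟨h1f, h1g⟩, rfl⟩ u ⟨t2, ⟨h2f, h2g⟩, rfl⟩ -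
    exact ⟨t1 ∪ t2, ⟨h1f.union h2f, Set.union_subset h1g h2g⟩, Set.sInter_union t1 t2⟩
  have hCgen : mS = MeasurableSpace.generateFrom C := by
    refine le_antisymm ?_ (MeasurableSpace.generateFrom_le hCmeas)
    rw [← hg0gen]
    refine MeasurableSpace.generateFrom_le fun s hs => ?_
    exact MeasurableSpace.measurableSet_generateFrom
      ⟨{s}, ⟨Set.finite_singleton s, Set.singleton_subset_iff.2 hs⟩, Set.sInter_singleton s⟩
  -- the good set of measures
  set T : Set (Measure S) :=
    ⋂ A ∈ C, ⋂ B ∈ C, {p : Measure S |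
      ∫⁻ y, A.indicator (fun y => K y B) y ∂p = p A * p B} with hTdef
  have hTmeas : MeasurableSet T := by
    refine MeasurableSet.biInter hCc fun A hA => MeasurableSet.biInter hCc fun B hB => ?_
    have hu : Measurable fun p : Measure S => ∫⁻ y, A.indicator (fun y => K y B) y ∂p :=
      Measure.measurable_lintegral
        (((Measure.measurable_coe (hCmeas B hB)).comp hKmeas).indicator (hCmeas A hA))
    have hv : Measurable fun p : Measure S => p A * p B :=
      (Measure.measurable_coe (hCmeas A hA)).mul (Measure.measurable_coe (hCmeas B hB))
    have : {p : Measure S |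
        ∫⁻ y, A.indicator (fun y => K y B) y ∂p = p A * p B}
        = {p : Measure S | (fun p : Measure S =>
            ∫⁻ y, A.indicator (fun y => K y B) y ∂p) p ≤ (fun p : Measure S => p A * p B) p}
          ∩ {p : Measure S | (fun p : Measure S => p A * p B) p ≤ (fun p : Measure S =>
            ∫⁻ y, A.indicator (fun y => K y B) y ∂p) p} := by
      ext p; simp [le_antisymm_iff]
    rw [this]
    exact (measurableSet_le hu hv).inter (measurableSet_le hv hu)
  refine ⟨K ⁻¹' T, ⟨T, hTmeas, rfl⟩, ?_, ?_⟩
  · -- ν (K ⁻¹' T) = 1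
    have hFm : MeasurableSet (K ⁻¹' T) := hKmeas hTmeas
    have hae : ∀ᵐ x ∂ν, x ∈ K ⁻¹' T := by
      have h1 : ∀ᵐ x ∂ν, ∀ A ∈ C, ∀ B ∈ C,
          ∫⁻ y, A.indicator (fun y => K y B) y ∂(K x) = K x A * K x B := by
        rw [ae_ball_iff hCc]
        intro A hA
        rw [ae_ball_iff hCc]
        intro B hB
        exact rcd_ae_eq hle hKmeas hKG hrcd (hCmeas A hA) (hCmeas B hB)
      filter_upwards [h1] with x hx
      simp only [hTdef, Set.mem_preimage, Set.mem_iInter, Set.mem_setOf_eq]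
      exact fun A hA B hB => hx A hA B hB
    rw [← prob_compl_eq_zero_iff hFm]
    exact ae_iff.mp hae
  · -- the pointwise statement
    intro x hx A B hA hB
    haveI := hKprob x
    simp only [hTdef, Set.mem_preimage, Set.mem_iInter, Set.mem_setOf_eq] at hx
    have hx' : ∀ A' ∈ C, ∀ B' ∈ C, ∫⁻ y in A', K y B' ∂(K x) = K x A' * K x B' := by
      intro A' hA' B' hB'
      rw [← lintegral_indicator (hCmeas A' hA')]
      exact hx A' hA' B' hB'
    -- Step A : extend over B for A' ∈ C
    have stepA : ∀ A' ∈ C, ∀ B' : Set S, MeasurableSet B' →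
        ∫⁻ y in A', K y B' ∂(K x) = K x A' * K x B' := by
      intro A' hA' B' hB'
      have hμ1 : ∀ s : Set S, MeasurableSet s →
          ((K x).restrict A').bind K s = ∫⁻ y in A', K y s ∂(K x) := fun s hs =>
        Measure.bind_apply hs hKmeas.aemeasurable
      have huniv : ((K x).restrict A').bind K Set.univ = K x A' := by
        rw [hμ1 _ MeasurableSet.univ]
        calc ∫⁻ y in A', K y Set.univ ∂(K x)
            = ∫⁻ _ in A', 1 ∂(K x) := by
              refine lintegral_congr fun y => ?_
              haveI := hKprob y
              exact measure_univ
          _ = K x A' := setLIntegral_one A'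
      haveI : IsFiniteMeasure (((K x).restrict A').bind K) :=
        ⟨by rw [huniv]; exact measure_lt_top _ _⟩
      haveI : IsFiniteMeasure ((K x A') • K x) :=
        ⟨by rw [Measure.smul_apply, smul_eq_mul, measure_univ, mul_one]
            exact measure_lt_top _ _⟩
      have hext : ((K x).restrict A').bind K = (K x A') • K x := by
        refine MeasureTheory.ext_of_generate_finite C hCgen hCpi ?_ ?_
        · intro s hs
          rw [hμ1 s (hCmeas s hs), hx' A' hA' s hs, Measure.smul_apply, smul_eq_mul]
        · rw [huniv, Measure.smul_apply, smul_eq_mul, measure_univ, mul_one]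
      rw [← hμ1 B' hB', hext, Measure.smul_apply, smul_eq_mul]
    -- Step B : extend over A for arbitrary measurable B
    have hfB : Measurable fun y => K y B := (Measure.measurable_coe hB).comp hKmeas
    have hone : ∀ p : Measure S, p = K x → True := fun _ _ => trivial
    have hlt : ((K x).withDensity fun y => K y B) Set.univ < ⊤ := by
      rw [withDensity_apply _ MeasurableSet.univ, Measure.restrict_univ]
      calc ∫⁻ y, K y B ∂(K x) ≤ ∫⁻ _, 1 ∂(K x) := by
            refine lintegral_mono fun y => ?_
            haveI := hKprob y
            exact prob_le_one
        _ = 1 := by simp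
        _ < ⊤ := ENNReal.one_lt_top
    haveI : IsFiniteMeasure ((K x).withDensity fun y => K y B) := ⟨hlt⟩
    haveI : IsFiniteMeasure ((K x B) • K x) :=
      ⟨by rw [Measure.smul_apply, smul_eq_mul, measure_univ, mul_one]
          exact measure_lt_top _ _⟩
    have hext2 : ((K x).withDensity fun y => K y B) = (K x B) • K x := by
      refine MeasureTheory.ext_of_generate_finite C hCgen hCpi ?_ ?_
      · intro s hs
        rw [withDensity_apply _ (hCmeas s hs), stepA s hs B hB,
          Measure.smul_apply, smul_eq_mul, mul_comm]
      · have h := stepA Set.univ hCuniv B hB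
        rw [Measure.restrict_univ] at h
        rw [withDensity_apply _ MeasurableSet.univ, Measure.restrict_univ, h,
          Measure.smul_apply, smul_eq_mul, measure_univ, one_mul, mul_one]
    rw [← withDensity_apply _ hA, hext2, Measure.smul_apply, smul_eq_mul, mul_comm]


theorem stmt_1 {S : Type*} [mS : MeasurableSpace S] [StandardBorelSpace S]
    (ν : Measure S) [IsProbabilityMeasure ν] (K : S → Measure S)
    (hK : ∃ G : MeasurableSpace S, IsRCD (mS := mS) ν K G) :
    ∃ F : Set S, MeasurableSet[sigmaK K] F ∧ ν F = 1 ∧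
      ∀ x ∈ F, ∀ A B : Set S, MeasurableSet A → MeasurableSet B →
        ∫⁻ y in A, K y B ∂(K x) = K x A * K x B := by
  obtain ⟨G, hle, hKmeas, hKprob, hKG, hrcd⟩ := hK
  exact stmt_1_aux (mS := mS) ν K hle hKmeas hKprob hKG hrcd

end
end

section
/- Suppose X satisfies condition (1.1) with probability measure ν, constant θ > 0 and kernel K, and suppose in addition that ∫_S K(y)(A) ν(dy) = ν(A) for every A ∈ B. Then X_n ∼ ν for every n ≥ 1. -/
open MeasureTheory ProbabilityTheory Filter Set ENNReal NNReal

noncomputable section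

variable {Ω S : Type*}

theorem stmt_5 {Ω S : Type*} [MeasurableSpace Ω] [mS : MeasurableSpace S] [StandardBorelSpace S]
    (P : Measure Ω) [IsProbabilityMeasure P] (X : ℕ → Ω → S) (ν : Measure S)
    [IsProbabilityMeasure ν] (θ : ℝ) (hθ : 0 < θ) (K : S → Measure S)
    (hKm : Measurable K) (hKp : ∀ x, IsProbabilityMeasure (K x))
    (hX : Cond11 P X ν θ K)
    (hmean : ∀ A : Set S, MeasurableSet A → ∫⁻ y, K y A ∂ν = ν A) :
    ∀ n : ℕ, P.map (X n) = ν := by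
  obtain ⟨hXm, h0, hcond⟩ := hX
  intro n
  induction n using Nat.strong_induction_on with
  | _ n IH =>
    match n with
    | 0 => exact h0
    | (m + 1) =>
      set n : ℕ := m + 1 with hn_def
      have hn : 1 ≤ n := Nat.succ_le_succ (Nat.zero_le m)
      -- measurability of ω ↦ (K (X i ω) A).toReal
      apply Measure.ext
      intro A hA
      have hgm : ∀ i : ℕ, Measurable fun ω => (K (X i ω) A).toReal :=
        fun i => ((Measure.measurable_coe hA).comp (hKm.comp (hXm i))).ennreal_toReal
      have hgbd : ∀ i : ℕ, ∀ ω, ‖(K (X i ω) A).toReal‖ ≤ 1 := by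
        intro i ω
        have : K (X i ω) A ≤ 1 := by
          have := (hKp (X i ω)).measure_univ
          calc K (X i ω) A ≤ K (X i ω) Set.univ := measure_mono (Set.subset_univ A)
            _ = 1 := this
        rw [Real.norm_eq_abs, abs_of_nonneg ENNReal.toReal_nonneg]
        exact ENNReal.toReal_le_of_le_ofReal zero_le_one (by simpa using this)
      have hgint : ∀ i : ℕ, Integrable (fun ω => (K (X i ω) A).toReal) P := by
        intro i
        exact (integrable_const (1 : ℝ)).mono' (hgm i).aestronglyMeasurable
          (Filter.Eventually.of_forall (hgbd i))
      -- key: ∫ (K (X i ω) A).toReal dP = (ν A).toReal for i < n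
      have key : ∀ i < n, ∫ ω, (K (X i ω) A).toReal ∂P = (ν A).toReal := by
        intro i hi
        have hmeas : Measurable fun y : S => (K y A).toReal :=
          ((Measure.measurable_coe hA).comp hKm).ennreal_toReal
        rw [← integral_map (hXm i).aemeasurable hmeas.aestronglyMeasurable, IH i hi]
        have hm2 : Measurable fun y : S => K y A := (Measure.measurable_coe hA).comp hKm
        rw [integral_toReal hm2.aemeasurable
          (Filter.Eventually.of_forall fun y => measure_lt_top _ _)]
        rw [hmean A hA]
      -- the σ-field bound
      have hle : Filtr X n ≤ ‹MeasurableSpace Ω› :=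
        iSup_le fun i => (hXm i).comap_le
      haveI : SigmaFinite (P.trim hle) := by
        haveI : IsFiniteMeasure (P.trim hle) := isFiniteMeasure_trim hle
        infer_instance
      -- integrate the conditional expectation identity
      have hind : Integrable ((X n ⁻¹' A).indicator (fun _ => (1 : ℝ))) P :=
        (integrable_const (1 : ℝ)).indicator (hXm n hA)
      have h1 : ∫ ω, ((X n ⁻¹' A).indicator (fun _ => (1 : ℝ))) ω ∂P
          = ∫ ω, predReal X ν θ K n ω A ∂P := by
        rw [← integral_condExp hle]
        exact integral_congr_ae (hcond n hn A hA)
      have h2 : ∫ ω, ((X n ⁻¹' A).indicator (fun _ => (1 : ℝ))) ω ∂P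
          = (P (X n ⁻¹' A)).toReal := integral_indicator_one (hXm n hA)
      -- compute ∫ predReal
      have h3 : ∫ ω, predReal X ν θ K n ω A ∂P = (ν A).toReal := by
        unfold predReal
        rw [integral_div]
        rw [integral_add (integrable_const _) (integrable_finset_sum _ fun i _ => hgint i)]
        rw [integral_const, integral_finset_sum _ fun i _ => hgint i]
        rw [Finset.sum_congr rfl fun i hi => key i (Finset.mem_range.mp hi)]
        rw [Finset.sum_const, Finset.card_range]
        have hne : (n : ℝ) + θ ≠ 0 := by positivity
        simp only [measure_univ, probReal_univ, ENNReal.toReal_one, smul_eq_mul, one_mul, nsmul_eq_mul]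
        field_simp
        ring
      have h4 : (P (X n ⁻¹' A)).toReal = (ν A).toReal := by rw [h2.symm.trans (h1.trans h3)]
      rw [Measure.map_apply (hXm n) hA]
      exact (ENNReal.toReal_eq_toReal_iff' (measure_ne_top _ _) (measure_ne_top _ _)).mp h4

end
end

section
/- If X ∈ L, then for every n ≥ 1 and every B ∈ σ(K), P(X_{n+1} ∈ B | F_n) = (θ ν(B) + Σ_{i=1}^n δ_{X_i}(B)) / (n + θ) a.s., where δ_x is the unit mass at x. -/
open MeasureTheory ProbabilityTheory Filter Set ENNReal NNReal

noncomputable section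

variable {Ω S : Type*}

lemma sigmaK_le' {S : Type*} [mS : MeasurableSpace S] {ν : Measure S} {K : S → Measure S}
    {G : MeasurableSpace S} (h : IsRCD (mS := mS) ν K G) : sigmaK (mS := mS) K ≤ G := by
  have hK : @Measurable S (@Measure S mS) G (@Measure.instMeasurableSpace S mS) K :=
    @Measure.measurable_of_measurable_coe S S mS G K fun s hs => h.2.2.2.1 s hs
  exact fun A hA => by
    obtain ⟨C, hC, rfl⟩ := hA
    exact hK hC

lemma rcd_dirac' {S : Type*} [mS : MeasurableSpace S] {ν : Measure S} [IsProbabilityMeasure ν]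
    {K : S → Measure S} {G : MeasurableSpace S} (h : IsRCD (mS := mS) ν K G)
    {B : Set S} (hB : MeasurableSet[sigmaK (mS := mS) K] B) :
    ∀ᵐ x ∂ν, K x B = B.indicator 1 x := by
  have hBG : MeasurableSet[G] B := sigmaK_le' (mS := mS) h B hB
  have hBm : MeasurableSet[mS] B := h.1 B hBG
  have hf : Measurable[mS] fun x => K x B := (h.2.2.2.1 B hBm).mono h.1 le_rfl
  have hle : ∀ x, K x B ≤ 1 := fun x =>
    le_trans (measure_mono (Set.subset_univ B)) (le_of_eq (h.2.2.1 x).measure_univ)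
  have h2 : ∫⁻ x in Bᶜ, K x B ∂ν = 0 := by
    have := h.2.2.2.2 B hBm Bᶜ hBG.compl
    rw [← this, Set.inter_compl_self, measure_empty]
  have hz : ∀ᵐ x ∂ν, x ∈ Bᶜ → K x B = 0 :=
    (setLIntegral_eq_zero_iff hBm.compl hf).mp h2
  have h1 : ∫⁻ x in B, K x B ∂ν = ν B := by
    have := h.2.2.2.2 B hBm B hBG
    rw [← this, Set.inter_self]
  have hsub : ∫⁻ x in B, (1 - K x B) ∂ν = 0 := by
    rw [@lintegral_sub S mS (ν.restrict B) _ _ hf (by rw [h1]; exact measure_ne_top ν B)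
      (Filter.Eventually.of_forall fun x => hle x), h1, setLIntegral_one, tsub_self]
  have ho : ∀ᵐ x ∂ν, x ∈ B → (1 : ℝ≥0∞) - K x B = 0 :=
    (setLIntegral_eq_zero_iff hBm (measurable_const.sub hf)).mp hsub
  filter_upwards [hz, ho] with x hx1 hx2
  by_cases hxB : x ∈ B
  · have hge : (1 : ℝ≥0∞) ≤ K x B := tsub_eq_zero_iff_le.mp (hx2 hxB)
    rw [Set.indicator_of_mem hxB, le_antisymm (hle x) hge]; rfl
  · rw [Set.indicator_of_notMem hxB, hx1 hxB]

lemma rcd_facts' {S : Type*} [mS : MeasurableSpace S] {ν : Measure S} {K : S → Measure S}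
    {G : MeasurableSpace S} (hG : IsRCD (mS := mS) ν K G) :
    (∀ x A, K x A ≤ 1) ∧ (∀ A : Set S, MeasurableSet[mS] A →
      (Measurable[mS] fun x => K x A) ∧ ∫⁻ x, K x A ∂ν = ν A) := by
  refine ⟨fun x A => le_trans (measure_mono (Set.subset_univ A))
    (le_of_eq (hG.2.2.1 x).measure_univ), fun A hA => ⟨(hG.2.2.2.1 A hA).mono hG.1 le_rfl, ?_⟩⟩
  have := hG.2.2.2.2 A hA Set.univ (@MeasurableSet.univ S G)
  rw [Set.inter_univ, setLIntegral_univ] at this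
  exact this.symm

lemma marginal_lemma' {Ω S : Type*} [MeasurableSpace Ω] [mS : MeasurableSpace S]
    (P : Measure Ω) [IsProbabilityMeasure P] (X : ℕ → Ω → S) (ν : Measure S)
    [IsProbabilityMeasure ν] (θ : ℝ) (hθ : 0 < θ) (K : S → Measure S)
    (hKle : ∀ x A, K x A ≤ 1)
    (hKfacts : ∀ A : Set S, MeasurableSet A →
      (Measurable fun x => K x A) ∧ ∫⁻ x, K x A ∂ν = ν A)
    (hc : Cond11 P X ν θ K) :
    ∀ i, P.map (X i) = ν := by
  have hX := hc.1
  intro i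
  induction i using Nat.strong_induction_on with
  | _ i ih =>
    rcases Nat.eq_zero_or_pos i with h0 | hpos
    · subst h0; exact hc.2.1
    · refine Measure.ext fun A hA => ?_
      have hKA : Measurable[mS] fun x => K x A := (hKfacts A hA).1
      have hterm : ∀ j < i, ∫ ω, (K (X j ω) A).toReal ∂P = (ν A).toReal := by
        intro j hj
        have hmeas : Measurable fun ω => K (X j ω) A := hKA.comp (hX j)
        rw [integral_toReal hmeas.aemeasurable
          (Filter.Eventually.of_forall fun ω => lt_of_le_of_lt (hKle _ _) one_lt_top)]
        congr 1
        rw [← lintegral_map hKA (hX j), ih j hj, (hKfacts A hA).2]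
      have hintg : ∀ j ∈ Finset.range i,
          Integrable (fun ω => (K (X j ω) A).toReal) P := by
        intro j _
        refine (integrable_const (1 : ℝ)).mono'
          ((hKA.comp (hX j)).ennreal_toReal).aestronglyMeasurable
          (Filter.Eventually.of_forall fun ω => ?_)
        rw [Real.norm_eq_abs, abs_of_nonneg ENNReal.toReal_nonneg]
        exact ENNReal.toReal_mono one_ne_top (hKle _ _) |>.trans_eq ENNReal.toReal_one
      have hm : Filtr X i ≤ ‹MeasurableSpace Ω› :=
        iSup_le fun j => (hX j).comap_le
      have hce := hc.2.2 i hpos A hA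
      have hI : (P (X i ⁻¹' A)).toReal = ∫ ω, predReal X ν θ K i ω A ∂P := by
        rw [← integral_congr_ae hce, integral_condExp hm]
        exact (integral_indicator_one (hX i hA)).symm
      have hIR : ∫ ω, predReal X ν θ K i ω A ∂P = (ν A).toReal := by
        unfold predReal
        rw [integral_div]
        rw [integral_add (integrable_const _) (integrable_finset_sum _ hintg),
          integral_const, integral_finset_sum _ hintg]
        have : ∀ j ∈ Finset.range i, ∫ ω, (K (X j ω) A).toReal ∂P = (ν A).toReal :=
          fun j hj => hterm j (Finset.mem_range.mp hj)
        rw [Finset.sum_congr rfl this, Finset.sum_const, Finset.card_range]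
        simp only [measure_univ, probReal_univ, ENNReal.toReal_one, smul_eq_mul, one_smul, nsmul_eq_mul]
        field_simp
        ring
      have hfin : P (X i ⁻¹' A) ≠ ⊤ := measure_ne_top _ _
      rw [Measure.map_apply (hX i) hA]
      exact (ENNReal.toReal_eq_toReal_iff' hfin (measure_ne_top _ _)).mp (hI.trans hIR)

theorem stmt_7 {Ω S : Type*} [MeasurableSpace Ω] [mS : MeasurableSpace S] [StandardBorelSpace S]
    (P : Measure Ω) [IsProbabilityMeasure P] (X : ℕ → Ω → S) (ν : Measure S)
    [IsProbabilityMeasure ν] (θ : ℝ) (hθ : 0 < θ) (K : S → Measure S)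
    (hL : MemL P X ν θ K) :
    ∀ n : ℕ, 1 ≤ n → ∀ B : Set S, MeasurableSet[sigmaK K] B →
      P[((X n) ⁻¹' B).indicator (fun _ => (1 : ℝ)) | Filtr X n]
        =ᵐ[P] fun ω =>
          (θ * (ν B).toReal + ∑ i ∈ Finset.range n, (Measure.dirac (X i ω) B).toReal) /
            (n + θ) := by
  obtain ⟨hc, hex⟩ := hL
  have hfacts : (∀ x A, K x A ≤ 1) ∧ (∀ A : Set S, MeasurableSet A →
      (Measurable fun x => K x A) ∧ ∫⁻ x, K x A ∂ν = ν A) := by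
    obtain ⟨G, hG⟩ := hex
    exact rcd_facts' (mS := mS) hG
  have hdirac : ∀ B : Set S, MeasurableSet[sigmaK K] B →
      ∀ᵐ x ∂ν, K x B = B.indicator 1 x := by
    intro B hB
    obtain ⟨G, hG⟩ := hex
    exact rcd_dirac' (mS := mS) hG hB
  have hmeas_of : ∀ B : Set S, MeasurableSet[sigmaK K] B → MeasurableSet[mS] B := by
    intro B hB
    obtain ⟨G, hG⟩ := hex
    exact hG.1 B (sigmaK_le' (mS := mS) hG B hB)
  have hmarg := marginal_lemma' P X ν θ hθ K hfacts.1 hfacts.2 hc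
  intro n hn B hB
  have hBm : MeasurableSet[mS] B := hmeas_of B hB
  have hce := hc.2.2 n hn B hBm
  refine hce.trans ?_
  have hae : ∀ᵐ ω ∂P, ∀ i ∈ Finset.range n, K (X i ω) B = B.indicator 1 (X i ω) := by
    rw [Finset.eventually_all]
    intro i _
    have h1 : ∀ᵐ x ∂(P.map (X i)), K x B = B.indicator 1 x := by
      rw [hmarg i]
      exact hdirac B hB
    exact ae_of_ae_map (hc.1 i).aemeasurable h1
  filter_upwards [hae] with ω hω
  unfold predReal
  congr 1
  congr 1
  refine Finset.sum_congr rfl fun i hi => ?_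
  rw [hω i hi, Measure.dirac_apply' _ hBm]


end
end

section
/- Suppose X ∈ L. Then for each fixed A ∈ B: (1/n) Σ_{i=1}^n K(X_i)(A) → μ(A) a.s. as n → ∞, and ∫_S K(x)(A) μ(dx) = μ(A) a.s. -/
open MeasureTheory ProbabilityTheory Filter Set ENNReal NNReal

noncomputable section

variable {Ω S : Type*}

set_option linter.unusedSectionVars false
section Aux

variable {Ω S : Type*} [mΩ : MeasurableSpace Ω] [mS : MeasurableSpace S]
variable {P : Measure Ω} [IsProbabilityMeasure P] {X : ℕ → Ω → S} {ν : Measure S}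
  [IsProbabilityMeasure ν] {θ : ℝ} {K : S → Measure S} {G : MeasurableSpace S}

/-- Two `G`-measurable functions with equal set-lintegrals over `G`-sets agree a.e. -/
lemma aux_ae_eq_of_G (hle : G ≤ mS) {f g : S → ℝ≥0∞} (hf : Measurable[G] f)
    (hg : Measurable[G] g)
    (h : ∀ t, MeasurableSet[G] t → ∫⁻ x in t, f x ∂ν = ∫⁻ x in t, g x ∂ν) : f =ᵐ[ν] g := by
  have htrim : f =ᵐ[ν.trim hle] g := by
    refine ae_eq_of_forall_setLIntegral_eq_of_sigmaFinite hf hg fun t ht _ => ?_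
    rw [restrict_trim hle ν ht, lintegral_trim hle hf, lintegral_trim hle hg]
    exact h t ht
  exact ae_eq_of_ae_eq_trim htrim

lemma aux_rcd_lintegral (hG : IsRCD (mS := mS) ν K G) {A : Set S} (hA : MeasurableSet[mS] A) :
    ∫⁻ x, K x A ∂ν = ν A := by
  have := hG.2.2.2.2 A hA Set.univ (@MeasurableSet.univ S G)
  simpa using this.symm

lemma aux_rcd_proj (hG : IsRCD (mS := mS) ν K G) {t : Set S} (ht : MeasurableSet[G] t) :
    ∀ᵐ x ∂ν, K x t = t.indicator (fun _ => (1 : ℝ≥0∞)) x := by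
  have hle := hG.1
  have hind : Measurable[G] (t.indicator fun _ => (1:ℝ≥0∞)) :=
    Measurable.indicator measurable_const ht
  refine aux_ae_eq_of_G (mS := mS) hle (hG.2.2.2.1 t (hle t ht)) hind fun t' ht' => ?_
  rw [← hG.2.2.2.2 t (hle t ht) t' ht', lintegral_indicator_const (hle t ht),
    Measure.restrict_apply (hle t ht), one_mul]

lemma aux_rcd_idem (hG : IsRCD (mS := mS) ν K G) {A : Set S} (hA : MeasurableSet[mS] A) :
    ∀ᵐ x ∂ν, ∫⁻ y, K y A ∂(K x) = K x A := by
  have hle := hG.1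
  have hh : Measurable[G] fun y => K y A := hG.2.2.2.1 A hA
  -- every G-simple function integrates to its own value, a.e.
  have step2 : ∀ s : @SimpleFunc S G ℝ≥0∞, ∀ᵐ x ∂ν, ∫⁻ y, s y ∂(K x) = s x := by
    intro s
    classical
    refine @SimpleFunc.induction S ℝ≥0∞ G _
      (fun s => ∀ᵐ x ∂ν, ∫⁻ y, s y ∂(K x) = s x) ?_ ?_ s
    · intro c t ht
      filter_upwards [aux_rcd_proj (mS := mS) hG ht] with x hx
      have hcoe : ⇑(@SimpleFunc.piecewise S ℝ≥0∞ G t ht (SimpleFunc.const _ c)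
          (SimpleFunc.const _ (0:ℝ≥0∞))) = t.indicator (fun _ => c) := by
        funext y
        rw [SimpleFunc.piecewise_apply, Set.indicator_apply]
        rfl
      rw [hcoe, lintegral_indicator_const (hle t ht), hx]
      by_cases hyt : x ∈ t <;> simp [Set.indicator_apply, hyt]
    · intro f g _ hf hg
      filter_upwards [hf, hg] with x hfx hgx
      have hco : ∀ y, (f + g) y = f y + g y := fun y => rfl
      simp only [hco]
      rw [lintegral_add_left (f.measurable.mono hle le_rfl), hfx, hgx]
  have main : ∀ᵐ x ∂ν, ∀ m : ℕ, ∫⁻ y, (@SimpleFunc.eapprox S G (fun y => K y A) m) y ∂(K x)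
      = (@SimpleFunc.eapprox S G (fun y => K y A) m) x := by
    rw [ae_all_iff]; intro m; exact step2 _
  filter_upwards [main] with x hx
  have hrw : (fun y => K y A) = fun y => ⨆ m, (@SimpleFunc.eapprox S G (fun y => K y A) m) y := by
    funext y
    exact (SimpleFunc.iSup_eapprox_apply hh y).symm
  calc ∫⁻ y, K y A ∂(K x)
      = ∫⁻ y, ⨆ m, (@SimpleFunc.eapprox S G (fun y => K y A) m) y ∂(K x) := by rw [← hrw]
    _ = ⨆ m, ∫⁻ y, (@SimpleFunc.eapprox S G (fun y => K y A) m) y ∂(K x) := by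
        refine lintegral_iSup (fun m => ((SimpleFunc.eapprox _ m).measurable).mono hle le_rfl) ?_
        intro a b hab y
        exact SimpleFunc.monotone_eapprox _ hab y
    _ = ⨆ m, (@SimpleFunc.eapprox S G (fun y => K y A) m) x := by simp only [hx]
    _ = K x A := SimpleFunc.iSup_eapprox_apply hh x

end Aux
/-- The predictive mixture applied to a nonnegative function. -/
def predE {Ω S : Type*} [MeasurableSpace S] (X : ℕ → Ω → S) (ν : Measure S) (θ : ℝ)
    (K : S → Measure S) (n : ℕ) (H : S → ℝ≥0∞) (ω : Ω) : ℝ≥0∞ :=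
  (ENNReal.ofReal θ * ∫⁻ x, H x ∂ν + ∑ i ∈ Finset.range n, ∫⁻ x, H x ∂(K (X i ω))) *
    ((n : ℝ≥0∞) + ENNReal.ofReal θ)⁻¹

section Aux2

variable {Ω S : Type*} [mΩ : MeasurableSpace Ω] [mS : MeasurableSpace S]
variable {P : Measure Ω} [IsProbabilityMeasure P] {X : ℕ → Ω → S} {ν : Measure S}
  [IsProbabilityMeasure ν] {θ : ℝ} {K : S → Measure S}

lemma filtr_le (hX : ∀ n, Measurable (X n)) (n : ℕ) : Filtr X n ≤ mΩ :=
  iSup_le fun i => (hX i).comap_le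

lemma measurable_filtr_X {i n : ℕ} (h : i < n) : Measurable[Filtr X n] (X i) :=
  Measurable.of_comap_le (le_iSup (fun j : Fin n => mS.comap (X (j : ℕ))) ⟨i, h⟩)

lemma integrable_of_bound {f : Ω → ℝ} (hf : AEStronglyMeasurable f P) (C : ℝ)
    (h : ∀ ω, |f ω| ≤ C) : Integrable f P :=
  Integrable.mono' (integrable_const C) hf
    (Filter.Eventually.of_forall fun ω => (Real.norm_eq_abs (f ω)) ▸ h ω)

lemma aux_denom_ne_zero (hθ : 0 < θ) (n : ℕ) : ((n : ℝ≥0∞) + ENNReal.ofReal θ) ≠ 0 :=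
  ne_of_gt (lt_of_lt_of_le (ENNReal.ofReal_pos.2 hθ) le_add_self)

lemma aux_denom_ne_top (n : ℕ) : ((n : ℝ≥0∞) + ENNReal.ofReal θ) ≠ ∞ :=
  ENNReal.add_ne_top.2 ⟨ENNReal.natCast_ne_top n, ENNReal.ofReal_ne_top⟩

lemma aux_ofReal_predReal (hθ : 0 < θ) {n : ℕ} {b : ℝ≥0∞} {c : ℕ → ℝ≥0∞}
    (hb : b ≠ ∞) (hc : ∀ i, c i ≠ ∞) :
    ENNReal.ofReal ((θ * b.toReal + ∑ i ∈ Finset.range n, (c i).toReal) / (↑n + θ))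
      = (ENNReal.ofReal θ * b + ∑ i ∈ Finset.range n, c i)
        * ((n : ℝ≥0∞) + ENNReal.ofReal θ)⁻¹ := by
  have hpos : (0:ℝ) < ↑n + θ := by positivity
  rw [ENNReal.ofReal_div_of_pos hpos, div_eq_mul_inv]
  congr 1
  · rw [ENNReal.ofReal_add (by positivity)
      (Finset.sum_nonneg fun i _ => ENNReal.toReal_nonneg),
      ENNReal.ofReal_mul hθ.le, ENNReal.ofReal_toReal hb,
      ENNReal.ofReal_sum_of_nonneg fun i _ => ENNReal.toReal_nonneg]
    congr 1
    exact Finset.sum_congr rfl fun i _ => ENNReal.ofReal_toReal (hc i)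
  · rw [ENNReal.ofReal_add (Nat.cast_nonneg n) hθ.le, ENNReal.ofReal_natCast]

lemma measurable_predE (hX : ∀ n, Measurable (X n)) (hK : Measurable K) {H : S → ℝ≥0∞}
    (hH : Measurable H) (n : ℕ) : Measurable (predE X ν θ K n H) := by
  refine Measurable.mul ?_ measurable_const
  refine Measurable.add measurable_const ?_
  exact Finset.measurable_sum _ fun i _ =>
    (Measure.measurable_lintegral hH).comp (hK.comp (hX i))

lemma predE_const_mul {H : S → ℝ≥0∞} (hH : Measurable H) (c : ℝ≥0∞) (n : ℕ) (ω : Ω) :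
    predE X ν θ K n (fun x => c * H x) ω = c * predE X ν θ K n H ω := by
  unfold predE
  simp only [lintegral_const_mul c hH]
  rw [← Finset.mul_sum]
  ring

lemma predE_add {H1 H2 : S → ℝ≥0∞} (h1 : Measurable H1) (h2 : Measurable H2) (n : ℕ) (ω : Ω) :
    predE X ν θ K n (H1 + H2) ω = predE X ν θ K n H1 ω + predE X ν θ K n H2 ω := by
  unfold predE
  simp only [Pi.add_apply, lintegral_add_left h1]
  rw [Finset.sum_add_distrib]
  ring

lemma predE_mono {H1 H2 : S → ℝ≥0∞} (h : ∀ x, H1 x ≤ H2 x) (n : ℕ) (ω : Ω) :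
    predE X ν θ K n H1 ω ≤ predE X ν θ K n H2 ω := by
  unfold predE
  refine mul_le_mul_left (add_le_add (mul_le_mul_right (lintegral_mono h) _)
    (Finset.sum_le_sum fun i _ => lintegral_mono h)) _

lemma predE_iSup {f : ℕ → S → ℝ≥0∞} (hf : ∀ k, Measurable (f k)) (hmono : Monotone f)
    (n : ℕ) (ω : Ω) :
    predE X ν θ K n (fun x => ⨆ k, f k x) ω = ⨆ k, predE X ν θ K n (f k) ω := by
  unfold predE
  have h2 : ∀ m : Measure S, ∫⁻ x, ⨆ k, f k x ∂m = ⨆ k, ∫⁻ x, f k x ∂m := fun m =>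
    lintegral_iSup hf hmono
  simp only [h2]
  rw [ENNReal.finsetSum_iSup_of_monotone
    (f := fun i k => ∫⁻ x, f k x ∂(K (X i ω)))
    (fun i k k' hk => lintegral_mono fun x => hmono hk x), ENNReal.mul_iSup,
    ENNReal.iSup_add_iSup_of_monotone
      (f := fun k => ENNReal.ofReal θ * ∫⁻ x, f k x ∂ν)
      (g := fun k => ∑ i ∈ Finset.range n, ∫⁻ x, f k x ∂(K (X i ω)))
      (fun k k' hk => mul_le_mul_right (lintegral_mono fun x => hmono hk x) _)
      (fun k k' hk => Finset.sum_le_sum fun i _ => lintegral_mono fun x => hmono hk x),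
    ENNReal.iSup_mul]

lemma predReal_nonneg (hθ : 0 < θ) (n : ℕ) (ω : Ω) (B : Set S) :
    0 ≤ predReal X ν θ K n ω B := by
  unfold predReal
  have : (0:ℝ) < ↑n + θ := by positivity
  positivity

lemma predReal_le_one (hθ : 0 < θ) (hKp : ∀ x, IsProbabilityMeasure (K x)) (n : ℕ) (ω : Ω)
    (B : Set S) : predReal X ν θ K n ω B ≤ 1 := by
  unfold predReal
  have hpos : (0:ℝ) < ↑n + θ := by positivity
  rw [div_le_one hpos]
  have h1 : (ν B).toReal ≤ 1 := by
    simpa using ENNReal.toReal_mono ENNReal.one_ne_top prob_le_one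
  have h2 : ∑ i ∈ Finset.range n, (K (X i ω) B).toReal ≤ (n : ℝ) := by
    have : ∀ i ∈ Finset.range n, (K (X i ω) B).toReal ≤ 1 := fun i _ => by
      haveI := hKp (X i ω)
      simpa using ENNReal.toReal_mono ENNReal.one_ne_top prob_le_one
    calc ∑ i ∈ Finset.range n, (K (X i ω) B).toReal ≤ ∑ i ∈ Finset.range n, (1:ℝ) :=
          Finset.sum_le_sum this
      _ = (n : ℝ) := by simp
  nlinarith

lemma measurable_predReal (hX : ∀ n, Measurable (X n)) (hK : Measurable K) {B : Set S}
    (hB : MeasurableSet[mS] B) (n : ℕ) : Measurable fun ω => predReal X ν θ K n ω B := by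
  unfold predReal
  refine Measurable.div_const (Measurable.add measurable_const ?_) _
  exact Finset.measurable_sum _ fun i _ =>
    ((Measure.measurable_coe hB).comp (hK.comp (hX i))).ennreal_toReal

lemma aux_base (hc : Cond11 P X ν θ K) (hθ : 0 < θ) (hKp : ∀ x, IsProbabilityMeasure (K x))
    (hK : Measurable K) {n : ℕ} (hn : 1 ≤ n) {s : Set Ω} (hs : MeasurableSet[Filtr X n] s)
    {B : Set S} (hB : MeasurableSet[mS] B) :
    ∫⁻ ω in s, B.indicator (fun _ => (1:ℝ≥0∞)) (X n ω) ∂P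
      = ∫⁻ ω in s, predE X ν θ K n (B.indicator fun _ => 1) ω ∂P := by
  have hX := hc.1
  have hle : Filtr X n ≤ mΩ := filtr_le hX n
  have hsm : MeasurableSet s := hle s hs
  have hint : Integrable ((X n ⁻¹' B).indicator fun _ => (1:ℝ)) P :=
    (integrable_const 1).indicator ((hX n) hB)
  have hintp : Integrable (fun ω => predReal X ν θ K n ω B) P := by
    refine integrable_of_bound (measurable_predReal hX hK hB n).aestronglyMeasurable 1
      fun ω => ?_
    rw [abs_le]
    exact ⟨by linarith [predReal_nonneg (X := X) (ν := ν) (K := K) hθ n ω B],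
      predReal_le_one hθ hKp n ω B⟩
  have hreal : ∫ ω in s, (X n ⁻¹' B).indicator (fun _ => (1:ℝ)) ω ∂P
      = ∫ ω in s, predReal X ν θ K n ω B ∂P := by
    rw [← setIntegral_condExp hle hint hs]
    exact setIntegral_congr_ae hsm ((hc.2.2 n hn B hB).mono fun ω h _ => h)
  have hL : ∫⁻ ω in s, B.indicator (fun _ => (1:ℝ≥0∞)) (X n ω) ∂P
      = ENNReal.ofReal (∫ ω in s, (X n ⁻¹' B).indicator (fun _ => (1:ℝ)) ω ∂P) := by
    rw [ofReal_integral_eq_lintegral_ofReal hint.restrict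
      (Filter.Eventually.of_forall fun ω => Set.indicator_nonneg (fun _ _ => zero_le_one) ω)]
    refine lintegral_congr fun ω => ?_
    by_cases h : X n ω ∈ B <;>
      simp [Set.indicator_apply, h, Set.mem_preimage]
  have hR : ∫⁻ ω in s, predE X ν θ K n (B.indicator fun _ => 1) ω ∂P
      = ENNReal.ofReal (∫ ω in s, predReal X ν θ K n ω B ∂P) := by
    rw [ofReal_integral_eq_lintegral_ofReal hintp.restrict
      (Filter.Eventually.of_forall fun ω => predReal_nonneg hθ n ω B)]
    refine lintegral_congr fun ω => ?_
    unfold predE predReal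
    rw [aux_ofReal_predReal hθ (measure_ne_top ν B) (fun i => measure_ne_top _ B)]
    simp only [lintegral_indicator_const hB, one_mul]
  rw [hL, hR, hreal]

end Aux2
section Aux3
set_option linter.unusedSectionVars false

variable {Ω S : Type*} [mΩ : MeasurableSpace Ω] [mS : MeasurableSpace S]
variable {P : Measure Ω} [IsProbabilityMeasure P] {X : ℕ → Ω → S} {ν : Measure S}
  [IsProbabilityMeasure ν] {θ : ℝ} {K : S → Measure S}

lemma aux_M1 (hc : Cond11 P X ν θ K) (hθ : 0 < θ) (hKp : ∀ x, IsProbabilityMeasure (K x))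
    (hK : Measurable K) {n : ℕ} (hn : 1 ≤ n) {s : Set Ω} (hs : MeasurableSet[Filtr X n] s) :
    ∀ ⦃H : S → ℝ≥0∞⦄, Measurable H →
      ∫⁻ ω in s, H (X n ω) ∂P = ∫⁻ ω in s, predE X ν θ K n H ω ∂P := by
  have hX := hc.1
  refine @Measurable.ennreal_induction S mS _ ?_ ?_ ?_
  · intro c B hB
    have hpt : ∀ y, B.indicator (fun _ => c) y = c * B.indicator (fun _ => (1:ℝ≥0∞)) y := by
      intro y; by_cases h : y ∈ B <;> simp [Set.indicator_apply, h]
    calc ∫⁻ ω in s, B.indicator (fun _ => c) (X n ω) ∂P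
        = c * ∫⁻ ω in s, B.indicator (fun _ => (1:ℝ≥0∞)) (X n ω) ∂P := by
          simp only [hpt]
          rw [lintegral_const_mul c (show Measurable fun ω => B.indicator (fun _ => (1:ℝ≥0∞)) (X n ω) from (measurable_const.indicator hB).comp (hX n))]
      _ = c * ∫⁻ ω in s, predE X ν θ K n (B.indicator fun _ => 1) ω ∂P := by
          rw [aux_base hc hθ hKp hK hn hs hB]
      _ = ∫⁻ ω in s, predE X ν θ K n (B.indicator fun _ => c) ω ∂P := by
          rw [← lintegral_const_mul c
            (measurable_predE hX hK (measurable_const.indicator hB) n)]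
          refine lintegral_congr fun ω => ?_
          rw [← predE_const_mul (measurable_const.indicator hB) c n ω]
          congr 1
          funext y
          rw [hpt]
  · intro f g _ hf hg Pf Pg
    simp only [Pi.add_apply]
    rw [lintegral_add_left (show Measurable fun ω => f (X n ω) from hf.comp (hX n)), Pf, Pg]
    have : ∀ ω, predE X ν θ K n (f + g) ω = predE X ν θ K n f ω + predE X ν θ K n g ω :=
      predE_add hf hg n
    simp only [this]
    rw [lintegral_add_left (measurable_predE hX hK hf n)]
  · intro f hf hmono Pf
    have h1 : ∫⁻ ω in s, ⨆ k, f k (X n ω) ∂P = ⨆ k, ∫⁻ ω in s, f k (X n ω) ∂P :=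
      lintegral_iSup (fun k => (hf k).comp (hX n)) (fun k k' hk ω => hmono hk _)
    have h2 : ∫⁻ ω in s, predE X ν θ K n (fun x => ⨆ k, f k x) ω ∂P
        = ⨆ k, ∫⁻ ω in s, predE X ν θ K n (f k) ω ∂P := by
      have : ∀ ω, predE X ν θ K n (fun x => ⨆ k, f k x) ω = ⨆ k, predE X ν θ K n (f k) ω :=
        predE_iSup hf hmono n
      simp only [this]
      exact lintegral_iSup (fun k => measurable_predE hX hK (hf k) n)
        (fun k k' hk ω => predE_mono (fun x => hmono hk x) n ω)
    rw [h1, h2]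
    exact iSup_congr Pf

lemma aux_M2 (hc : Cond11 P X ν θ K) (hθ : 0 < θ) (hKp : ∀ x, IsProbabilityMeasure (K x))
    (hK : Measurable K) {n : ℕ} (hn : 1 ≤ n) {H : S → ℝ≥0∞} (hH : Measurable H) :
    ∀ ⦃W : Ω → ℝ≥0∞⦄, Measurable[Filtr X n] W →
      ∫⁻ ω, W ω * H (X n ω) ∂P = ∫⁻ ω, W ω * predE X ν θ K n H ω ∂P := by
  have hX := hc.1
  have hle : Filtr X n ≤ mΩ := filtr_le hX n
  have hmH : Measurable fun ω => H (X n ω) := hH.comp (hX n)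
  have hmP : Measurable (predE X ν θ K n H) := measurable_predE hX hK hH n
  refine @Measurable.ennreal_induction Ω (Filtr X n) _ ?_ ?_ ?_
  · intro c u hu
    have key : ∀ (F : Ω → ℝ≥0∞), Measurable F →
        ∫⁻ ω, u.indicator (fun _ => c) ω * F ω ∂P = c * ∫⁻ ω in u, F ω ∂P := by
      intro F hF
      have hpt : ∀ ω, u.indicator (fun _ => c) ω * F ω
          = u.indicator (fun ω => c * F ω) ω := by
        intro ω; by_cases h : ω ∈ u <;> simp [Set.indicator_apply, h]
      simp only [hpt]
      rw [lintegral_indicator (hle u hu), lintegral_const_mul c hF]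
    rw [key _ hmH, key _ hmP, aux_M1 hc hθ hKp hK hn hu hH]
  · intro W1 W2 _ h1 h2 P1 P2
    simp only [Pi.add_apply, add_mul]
    rw [lintegral_add_left (f := fun ω => W1 ω * H (X n ω)) ((h1.mono hle le_rfl).mul hmH),
      lintegral_add_left (f := fun ω => W1 ω * predE X ν θ K n H ω) ((h1.mono hle le_rfl).mul hmP), P1, P2]
  · intro W hW hmono PW
    have hpt1 : ∀ ω, (fun ω => ⨆ k, W k ω) ω * H (X n ω) = ⨆ k, W k ω * H (X n ω) := by
      intro ω; exact ENNReal.iSup_mul _ _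
    have hpt2 : ∀ ω, (fun ω => ⨆ k, W k ω) ω * predE X ν θ K n H ω
        = ⨆ k, W k ω * predE X ν θ K n H ω := by
      intro ω; exact ENNReal.iSup_mul _ _
    simp only [hpt1, hpt2]
    rw [lintegral_iSup (f := fun k ω => W k ω * H (X n ω)) (fun k => ((hW k).mono hle le_rfl).mul hmH)
        (fun k k' hk ω => mul_le_mul_left (hmono hk ω) _),
      lintegral_iSup (f := fun k ω => W k ω * predE X ν θ K n H ω) (fun k => ((hW k).mono hle le_rfl).mul hmP)
        (fun k k' hk ω => mul_le_mul_left (hmono hk ω) _)]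
    exact iSup_congr PW

lemma aux_law (hc : Cond11 P X ν θ K) (hθ : 0 < θ)
    (hKp : ∀ x, IsProbabilityMeasure (K x)) (hK : Measurable K)
    (hA1 : ∀ B : Set S, MeasurableSet[mS] B → ∫⁻ x, K x B ∂ν = ν B) :
    ∀ n, P.map (X n) = ν := by
  intro n
  induction n using Nat.strong_induction_on with
  | _ n ih =>
    cases n with
    | zero => exact hc.2.1
    | succ m =>
      have hn : 1 ≤ m + 1 := Nat.succ_le_succ (Nat.zero_le m)
      refine Measure.ext fun B hB => ?_
      have hindm : Measurable (B.indicator fun _ => (1:ℝ≥0∞)) :=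
        measurable_const.indicator hB
      have h1 := aux_M1 (n := m+1) hc hθ hKp hK hn (s := Set.univ)
        MeasurableSet.univ hindm
      rw [Measure.restrict_univ] at h1
      have hL : ∫⁻ ω, B.indicator (fun _ => (1:ℝ≥0∞)) (X (m+1) ω) ∂P
          = P.map (X (m+1)) B := by
        rw [lintegral_indicator_const_comp (hc.1 (m+1)) hB, one_mul,
          Measure.map_apply (hc.1 (m+1)) hB]
      have hpe : ∀ ω, predE X ν θ K (m+1) (B.indicator fun _ => 1) ω
          = (ENNReal.ofReal θ * ν B + ∑ i ∈ Finset.range (m+1), K (X i ω) B)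
            * (((m+1 : ℕ) : ℝ≥0∞) + ENNReal.ofReal θ)⁻¹ := by
        intro ω
        unfold predE
        simp only [lintegral_indicator_const hB, one_mul]
      have hKint : ∀ i, i < m + 1 → ∫⁻ ω, K (X i ω) B ∂P = ν B := by
        intro i hi
        have : ∫⁻ ω, K (X i ω) B ∂P = ∫⁻ x, K x B ∂(P.map (X i)) :=
          (lintegral_map ((Measure.measurable_coe hB).comp hK) (hc.1 i)).symm
        rw [this, ih i hi, hA1 B hB]
      have hR : ∫⁻ ω, predE X ν θ K (m+1) (B.indicator fun _ => 1) ω ∂P = ν B := by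
        simp only [hpe]
        rw [lintegral_mul_const _ (by
          refine Measurable.add measurable_const ?_
          exact Finset.measurable_sum _ fun i _ =>
            (Measure.measurable_coe hB).comp (hK.comp (hc.1 i)))]
        rw [lintegral_add_left measurable_const, lintegral_const, measure_univ, mul_one,
          lintegral_finset_sum _ (fun i _ =>
            show Measurable fun ω => K (X i ω) B from
              (Measure.measurable_coe hB).comp (hK.comp (hc.1 i)))]
        have hsum : ∑ i ∈ Finset.range (m+1), ∫⁻ ω, K (X i ω) B ∂P
            = ((m+1 : ℕ) : ℝ≥0∞) * ν B := by
          rw [Finset.sum_congr rfl fun i hi => hKint i (Finset.mem_range.mp hi)]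
          simp [Finset.sum_const, nsmul_eq_mul]
        rw [hsum]
        calc (ENNReal.ofReal θ * ν B + ((m+1 : ℕ) : ℝ≥0∞) * ν B)
              * (((m+1 : ℕ) : ℝ≥0∞) + ENNReal.ofReal θ)⁻¹
            = ν B * ((((m+1 : ℕ) : ℝ≥0∞) + ENNReal.ofReal θ)
              * (((m+1 : ℕ) : ℝ≥0∞) + ENNReal.ofReal θ)⁻¹) := by ring
          _ = ν B := by
              rw [ENNReal.mul_inv_cancel (aux_denom_ne_zero hθ (m+1)) (aux_denom_ne_top (m+1)),
                mul_one]
      rw [hL, hR] at h1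
      exact h1
end Aux3
section Aux4
set_option linter.unusedSectionVars false

variable {Ω S : Type*} [mΩ : MeasurableSpace Ω] [mS : MeasurableSpace S]
variable {P : Measure Ω} [IsProbabilityMeasure P] {X : ℕ → Ω → S} {μ : Ω → Measure S}

lemma aux_squeeze {u : ℕ → ℝ} {c : ℝ} {L U : ℕ → ℕ → ℝ} {α β : ℕ → ℝ}
    (hL : ∀ m n, L m n ≤ u n) (hU : ∀ m n, u n ≤ U m n)
    (hLa : ∀ m, Tendsto (L m) atTop (nhds (α m)))
    (hUb : ∀ m, Tendsto (U m) atTop (nhds (β m)))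
    (hα : Tendsto α atTop (nhds c)) (hβ : Tendsto β atTop (nhds c)) :
    Tendsto u atTop (nhds c) := by
  rw [Metric.tendsto_atTop]
  intro ε hε
  have hε2 : 0 < ε / 2 := by linarith
  obtain ⟨m₁, hm₁⟩ := Metric.tendsto_atTop.1 hα (ε/2) hε2
  obtain ⟨m₂, hm₂⟩ := Metric.tendsto_atTop.1 hβ (ε/2) hε2
  set m := max m₁ m₂
  have hαm : |α m - c| < ε/2 := by
    have := hm₁ m (le_max_left _ _); rwa [Real.dist_eq] at this
  have hβm : |β m - c| < ε/2 := by
    have := hm₂ m (le_max_right _ _); rwa [Real.dist_eq] at this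
  obtain ⟨N₁, hN₁⟩ := Metric.tendsto_atTop.1 (hLa m) (ε/2) hε2
  obtain ⟨N₂, hN₂⟩ := Metric.tendsto_atTop.1 (hUb m) (ε/2) hε2
  refine ⟨max N₁ N₂, fun n hn => ?_⟩
  have h1 : |L m n - α m| < ε/2 := by
    have := hN₁ n (le_trans (le_max_left _ _) hn); rwa [Real.dist_eq] at this
  have h2 : |U m n - β m| < ε/2 := by
    have := hN₂ n (le_trans (le_max_right _ _) hn); rwa [Real.dist_eq] at this
  rw [Real.dist_eq, abs_lt]
  have e1 := abs_lt.1 hαm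
  have e2 := abs_lt.1 hβm
  have e3 := abs_lt.1 h1
  have e4 := abs_lt.1 h2
  have e5 := hL m n
  have e6 := hU m n
  constructor <;> linarith

lemma aux_simple_lintegral_ne_top (s : SimpleFunc S ℝ≥0∞) (hfin : ∀ x, s x ≠ ∞)
    (m : Measure S) [IsFiniteMeasure m] : ∫⁻ x, s x ∂m ≠ ∞ := by
  have hb : ∫⁻ x, s x ∂m ≤ (∑ c ∈ s.range, c) * m Set.univ := by
    refine le_trans (lintegral_mono fun x => ?_) (le_of_eq (lintegral_const _))
    exact Finset.single_le_sum (f := fun c => c) (fun _ _ => zero_le) (s.mem_range_self x)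
  refine ne_top_of_le_ne_top (ENNReal.mul_ne_top ?_ (measure_ne_top m _)) hb
  refine (ENNReal.sum_lt_top.2 fun c hc => ?_).ne
  obtain ⟨x, hx⟩ := SimpleFunc.mem_range.1 hc
  exact hx ▸ (hfin x).lt_top

lemma aux_avg_simple (hdir : IsDirecting P X μ) (hX : ∀ n, Measurable (X n)) :
    ∀ s : SimpleFunc S ℝ≥0∞, (∀ x, s x ≠ ∞) → ∀ᵐ ω ∂P, Tendsto
      (fun n : ℕ => (∑ i ∈ Finset.range n, (s (X i ω)).toReal) / n) atTop
      (nhds ((∫⁻ x, s x ∂(μ ω)).toReal)) := by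
  intro s
  refine SimpleFunc.induction (motive := fun s => (∀ x, s x ≠ ∞) → ∀ᵐ ω ∂P, Tendsto
      (fun n : ℕ => (∑ i ∈ Finset.range n, (s (X i ω)).toReal) / n) atTop
      (nhds ((∫⁻ x, s x ∂(μ ω)).toReal))) ?_ ?_ s
  · intro c B hB hfin
    have hcoe : ∀ y, (SimpleFunc.piecewise B hB (SimpleFunc.const _ c)
        (SimpleFunc.const _ (0:ℝ≥0∞))) y = B.indicator (fun _ => c) y := by
      intro y
      classical
      rw [SimpleFunc.piecewise_apply, Set.indicator_apply]
      rfl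
    by_cases hc : c = ∞
    · have hBe : B = ∅ := by
        by_contra hne
        obtain ⟨x, hx⟩ := Set.nonempty_iff_ne_empty.2 hne
        have := hfin x
        rw [hcoe x, Set.indicator_of_mem hx, hc] at this
        exact this rfl
      subst hBe
      refine Filter.Eventually.of_forall fun ω => ?_
      simp only [hcoe, Set.indicator_empty]
      simp [tendsto_const_nhds]
    · filter_upwards [hdir.2.2 B hB] with ω hω
      have hpt : ∀ y, (B.indicator (fun _ => c) y).toReal
          = c.toReal * B.indicator (fun _ => (1:ℝ)) y := by
        intro y
        by_cases h : y ∈ B <;> simp [Set.indicator_apply, h]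
      simp only [hcoe, hpt]
      have hfn : (fun n : ℕ =>
          (∑ i ∈ Finset.range n, c.toReal * B.indicator (fun _ => (1:ℝ)) (X i ω)) / n)
          = fun n : ℕ => c.toReal *
            ((∑ i ∈ Finset.range n, B.indicator (fun _ => (1:ℝ)) (X i ω)) / n) := by
        funext n
        rw [← Finset.mul_sum, mul_div_assoc]
      rw [hfn, lintegral_indicator_const hB, ENNReal.toReal_mul]
      exact hω.const_mul c.toReal
  · intro f g _ Pf Pg hfin
    have hff : ∀ x, f x ≠ ∞ := fun x =>
      ne_top_of_le_ne_top (hfin x) (by rw [SimpleFunc.coe_add]; exact self_le_add_right _ _)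
    have hgg : ∀ x, g x ≠ ∞ := fun x =>
      ne_top_of_le_ne_top (hfin x) (by rw [SimpleFunc.coe_add]; exact self_le_add_left _ _)
    filter_upwards [Pf hff, Pg hgg] with ω h1 h2
    haveI : IsProbabilityMeasure (μ ω) := hdir.2.1 ω
    have hpt : ∀ y, ((f + g) y).toReal = (f y).toReal + (g y).toReal := by
      intro y
      simp only [SimpleFunc.coe_add, Pi.add_apply]
      exact ENNReal.toReal_add (hff y) (hgg y)
    simp only [hpt]
    have hfn : (fun n : ℕ =>
        (∑ i ∈ Finset.range n, ((f (X i ω)).toReal + (g (X i ω)).toReal)) / n)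
        = fun n : ℕ => (∑ i ∈ Finset.range n, (f (X i ω)).toReal) / n
          + (∑ i ∈ Finset.range n, (g (X i ω)).toReal) / n := by
      funext n
      rw [Finset.sum_add_distrib, add_div]
    rw [hfn]
    have hint : ∫⁻ x, ((f + g) : SimpleFunc S ℝ≥0∞) x ∂(μ ω)
        = ∫⁻ x, f x ∂(μ ω) + ∫⁻ x, g x ∂(μ ω) := by
      simp only [SimpleFunc.coe_add, Pi.add_apply]
      exact lintegral_add_left f.measurable _
    rw [hint, ENNReal.toReal_add (aux_simple_lintegral_ne_top f hff (μ ω))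
      (aux_simple_lintegral_ne_top g hgg (μ ω))]
    exact h1.add h2

lemma aux_avg_tendsto (hdir : IsDirecting P X μ) (hX : ∀ n, Measurable (X n))
    {H : S → ℝ≥0∞} (hH : Measurable H) (hH1 : ∀ x, H x ≤ 1) :
    ∀ᵐ ω ∂P, Tendsto (fun n : ℕ => (∑ i ∈ Finset.range n, (H (X i ω)).toReal) / n) atTop
      (nhds ((∫⁻ x, H x ∂(μ ω)).toReal)) := by
  have hH' : Measurable fun x => 1 - H x := measurable_const.sub hH
  have hae1 : ∀ᵐ ω ∂P, ∀ m : ℕ, Tendsto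
      (fun n : ℕ => (∑ i ∈ Finset.range n, ((SimpleFunc.eapprox H m) (X i ω)).toReal) / n)
      atTop (nhds ((∫⁻ x, (SimpleFunc.eapprox H m) x ∂(μ ω)).toReal)) :=
    ae_all_iff.2 fun m => aux_avg_simple hdir hX _ fun x => (SimpleFunc.eapprox_lt_top H m x).ne
  have hae2 : ∀ᵐ ω ∂P, ∀ m : ℕ, Tendsto
      (fun n : ℕ => (∑ i ∈ Finset.range n,
        ((SimpleFunc.eapprox (fun x => 1 - H x) m) (X i ω)).toReal) / n)
      atTop (nhds ((∫⁻ x, (SimpleFunc.eapprox (fun x => 1 - H x) m) x ∂(μ ω)).toReal)) :=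
    ae_all_iff.2 fun m => aux_avg_simple hdir hX _ fun x =>
      (SimpleFunc.eapprox_lt_top _ m x).ne
  filter_upwards [hae1, hae2] with ω h1 h2
  haveI : IsProbabilityMeasure (μ ω) := hdir.2.1 ω
  have hHne : ∀ x, H x ≠ ∞ := fun x => ne_top_of_le_ne_top ENNReal.one_ne_top (hH1 x)
  have hHfin : ∫⁻ x, H x ∂(μ ω) ≤ 1 := by
    calc ∫⁻ x, H x ∂(μ ω) ≤ ∫⁻ _, 1 ∂(μ ω) := lintegral_mono hH1
      _ = 1 := by simp [lintegral_const]
  have hHfin' : ∫⁻ x, H x ∂(μ ω) ≠ ∞ := ne_top_of_le_ne_top ENNReal.one_ne_top hHfin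
  have hle_eapprox : ∀ (G : S → ℝ≥0∞), Measurable G → ∀ m x,
      (SimpleFunc.eapprox G m) x ≤ G x := by
    intro G hG m x
    calc (SimpleFunc.eapprox G m) x ≤ ⨆ k, (SimpleFunc.eapprox G k) x :=
          le_iSup (fun k => (SimpleFunc.eapprox G k) x) m
      _ = G x := SimpleFunc.iSup_eapprox_apply hG x
  have hkey : ∀ (G : S → ℝ≥0∞), Measurable G →
      Tendsto (fun m => ∫⁻ x, (SimpleFunc.eapprox G m) x ∂(μ ω)) atTop
        (nhds (∫⁻ x, G x ∂(μ ω))) := by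
    intro G hG
    have hmono2 : Monotone fun m => ∫⁻ x, (SimpleFunc.eapprox G m) x ∂(μ ω) :=
      fun a b h => lintegral_mono fun x => SimpleFunc.monotone_eapprox G h x
    have heq : (⨆ m, ∫⁻ x, (SimpleFunc.eapprox G m) x ∂(μ ω)) = ∫⁻ x, G x ∂(μ ω) := by
      rw [← lintegral_iSup (fun m => (SimpleFunc.eapprox G m).measurable)
        (fun a b h x => SimpleFunc.monotone_eapprox G h x)]
      exact lintegral_congr fun x => SimpleFunc.iSup_eapprox_apply hG x
    have := tendsto_atTop_iSup hmono2
    rwa [heq] at this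
  refine aux_squeeze
    (L := fun m n => (∑ i ∈ Finset.range n, ((SimpleFunc.eapprox H m) (X i ω)).toReal) / n)
    (U := fun m n => 1 - (∑ i ∈ Finset.range n,
      ((SimpleFunc.eapprox (fun x => 1 - H x) m) (X i ω)).toReal) / n)
    (α := fun m => (∫⁻ x, (SimpleFunc.eapprox H m) x ∂(μ ω)).toReal)
    (β := fun m => 1 - (∫⁻ x, (SimpleFunc.eapprox (fun x => 1 - H x) m) x ∂(μ ω)).toReal)
    ?_ ?_ h1 (fun m => (h2 m).const_sub 1) ?_ ?_
  · intro m n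
    have hsum : (∑ i ∈ Finset.range n, ((SimpleFunc.eapprox H m) (X i ω)).toReal)
        ≤ ∑ i ∈ Finset.range n, (H (X i ω)).toReal :=
      Finset.sum_le_sum fun i _ =>
        ENNReal.toReal_mono (hHne _) (hle_eapprox H hH m _)
    simp only [div_eq_mul_inv]
    exact mul_le_mul_of_nonneg_right hsum (by positivity)
  · intro m n
    rw [le_sub_iff_add_le, ← add_div, ← Finset.sum_add_distrib]
    have hterm : ∀ i ∈ Finset.range n, (H (X i ω)).toReal
        + ((SimpleFunc.eapprox (fun x => 1 - H x) m) (X i ω)).toReal ≤ 1 := by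
      intro i _
      have ht : ((SimpleFunc.eapprox (fun x => 1 - H x) m) (X i ω)).toReal
          ≤ 1 - (H (X i ω)).toReal := by
        have h1t := hle_eapprox _ hH' m (X i ω)
        have := ENNReal.toReal_mono (a := (SimpleFunc.eapprox (fun x => 1 - H x) m) (X i ω))
          (ENNReal.sub_ne_top ENNReal.one_ne_top) h1t
        rwa [ENNReal.toReal_sub_of_le (hH1 _) ENNReal.one_ne_top, ENNReal.toReal_one] at this
      linarith
    have hsum : (∑ i ∈ Finset.range n, ((H (X i ω)).toReal
        + ((SimpleFunc.eapprox (fun x => 1 - H x) m) (X i ω)).toReal)) ≤ (n : ℝ) := by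
      calc _ ≤ ∑ _i ∈ Finset.range n, (1:ℝ) := Finset.sum_le_sum hterm
        _ = (n : ℝ) := by simp
    rcases Nat.eq_zero_or_pos n with h | h
    · subst h; simp
    · exact (div_le_one (by exact_mod_cast h)).2 hsum
  · exact (ENNReal.tendsto_toReal hHfin').comp (hkey H hH)
  · have hH'fin : ∫⁻ x, (1:ℝ≥0∞) - H x ∂(μ ω) = 1 - ∫⁻ x, H x ∂(μ ω) := by
      have := lintegral_sub hH hHfin' (Filter.Eventually.of_forall hH1)
      simpa [lintegral_const] using this
    have hβ : Tendsto (fun m => 1 - (∫⁻ x,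
        (SimpleFunc.eapprox (fun x => 1 - H x) m) x ∂(μ ω)).toReal) atTop
        (nhds (1 - (∫⁻ x, (1:ℝ≥0∞) - H x ∂(μ ω)).toReal)) :=
      Filter.Tendsto.const_sub 1 ((ENNReal.tendsto_toReal (by
        rw [hH'fin]; exact ne_top_of_le_ne_top ENNReal.one_ne_top tsub_le_self)).comp
          (hkey _ hH'))
    have : 1 - (∫⁻ x, (1:ℝ≥0∞) - H x ∂(μ ω)).toReal = (∫⁻ x, H x ∂(μ ω)).toReal := by
      rw [hH'fin, ENNReal.toReal_sub_of_le hHfin ENNReal.one_ne_top, ENNReal.toReal_one]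
      ring
    rwa [this] at hβ

end Aux4
section Aux5
set_option linter.unusedSectionVars false

variable {Ω S : Type*} [mΩ : MeasurableSpace Ω] [mS : MeasurableSpace S]
variable {P : Measure Ω} [IsProbabilityMeasure P] {X : ℕ → Ω → S} {ν : Measure S}
  [IsProbabilityMeasure ν] {θ : ℝ} {K : S → Measure S}

lemma aux_predE_congr (hc : Cond11 P X ν θ K) (hθ : 0 < θ)
    (hKp : ∀ x, IsProbabilityMeasure (K x)) (hK : Measurable K)
    (hA1 : ∀ B : Set S, MeasurableSet[mS] B → ∫⁻ x, K x B ∂ν = ν B)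
    (hA2 : ∀ B : Set S, MeasurableSet[mS] B → ∀ᵐ x ∂ν, ∫⁻ y, K y B ∂(K x) = K x B)
    {A : Set S} (hA : MeasurableSet[mS] A) (n : ℕ) :
    ∀ᵐ ω ∂P, predE X ν θ K n (fun x => K x A) ω
      = predE X ν θ K n (A.indicator fun _ => 1) ω := by
  have hlaw := aux_law hc hθ hKp hK hA1
  have hone : ∀ i : ℕ, ∀ᵐ ω ∂P, ∫⁻ y, K y A ∂(K (X i ω)) = K (X i ω) A := by
    intro i
    have h := hA2 A hA
    rw [← hlaw i] at h
    exact ae_of_ae_map (hc.1 i).aemeasurable h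
  have hall : ∀ᵐ ω ∂P, ∀ i ∈ Finset.range n, ∫⁻ y, K y A ∂(K (X i ω)) = K (X i ω) A :=
    (eventually_all_finset (Finset.range n)).2 fun i _ => hone i
  filter_upwards [hall] with ω hω
  have h1 : ∫⁻ x, A.indicator (fun _ => (1:ℝ≥0∞)) x ∂ν = ∫⁻ x, K x A ∂ν := by
    rw [lintegral_indicator_const hA, one_mul, hA1 A hA]
  have h2 : ∀ i ∈ Finset.range n, ∫⁻ x, A.indicator (fun _ => (1:ℝ≥0∞)) x ∂(K (X i ω))
      = ∫⁻ y, K y A ∂(K (X i ω)) := fun i hi => by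
    rw [lintegral_indicator_const hA, one_mul, hω i hi]
  unfold predE
  rw [h1]
  congr 2
  exact (Finset.sum_congr rfl h2).symm

lemma aux_orth (hc : Cond11 P X ν θ K) (hθ : 0 < θ)
    (hKp : ∀ x, IsProbabilityMeasure (K x)) (hK : Measurable K)
    (hA1 : ∀ B : Set S, MeasurableSet[mS] B → ∫⁻ x, K x B ∂ν = ν B)
    (hA2 : ∀ B : Set S, MeasurableSet[mS] B → ∀ᵐ x ∂ν, ∫⁻ y, K y B ∂(K x) = K x B)
    {A : Set S} (hA : MeasurableSet[mS] A) {i n : ℕ} (hin : i < n) :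
    ∫ ω, ((K (X i ω) A).toReal - A.indicator (fun _ => (1:ℝ)) (X i ω))
        * ((K (X n ω) A).toReal - A.indicator (fun _ => (1:ℝ)) (X n ω)) ∂P = 0 := by
  have hX := hc.1
  have hn : 1 ≤ n := Nat.succ_le_of_lt (Nat.lt_of_le_of_lt (Nat.zero_le i) hin)
  have HAmeas : Measurable fun x => K x A := (Measure.measurable_coe hA).comp hK
  have hIndmeas : Measurable (A.indicator fun _ => (1:ℝ≥0∞)) := measurable_const.indicator hA
  have hHA1 : ∀ x, K x A ≤ 1 := fun x => by haveI := hKp x; exact prob_le_one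
  have hInd1 : ∀ x, A.indicator (fun _ => (1:ℝ≥0∞)) x ≤ 1 := fun x => by
    by_cases h : x ∈ A <;> simp [Set.indicator_apply, h]
  set aE : Ω → ℝ≥0∞ := fun ω => K (X i ω) A with haE
  set bE : Ω → ℝ≥0∞ := fun ω => A.indicator (fun _ => (1:ℝ≥0∞)) (X i ω) with hbE
  set cE : Ω → ℝ≥0∞ := fun ω => K (X n ω) A with hcE
  set eE : Ω → ℝ≥0∞ := fun ω => A.indicator (fun _ => (1:ℝ≥0∞)) (X n ω) with heE
  have haEm : Measurable aE := HAmeas.comp (hX i)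
  have hbEm : Measurable bE := hIndmeas.comp (hX i)
  have hcEm : Measurable cE := HAmeas.comp (hX n)
  have heEm : Measurable eE := hIndmeas.comp (hX n)
  have J : ∀ W : Ω → ℝ≥0∞, Measurable[Filtr X n] W →
      ∫⁻ ω, W ω * cE ω ∂P = ∫⁻ ω, W ω * eE ω ∂P := by
    intro W hWm
    have j1 := aux_M2 hc hθ hKp hK hn HAmeas hWm
    have j2 := aux_M2 hc hθ hKp hK hn (H := A.indicator fun _ => (1:ℝ≥0∞))
      (measurable_const.indicator hA) hWm
    have j3 : ∫⁻ ω, W ω * predE X ν θ K n (fun x => K x A) ω ∂P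
        = ∫⁻ ω, W ω * predE X ν θ K n (A.indicator fun _ => 1) ω ∂P := by
      refine lintegral_congr_ae ?_
      filter_upwards [aux_predE_congr hc hθ hKp hK hA1 hA2 hA n] with ω h
      rw [h]
    calc ∫⁻ ω, W ω * cE ω ∂P = ∫⁻ ω, W ω * predE X ν θ K n (fun x => K x A) ω ∂P := j1
      _ = ∫⁻ ω, W ω * predE X ν θ K n (A.indicator fun _ => 1) ω ∂P := j3
      _ = ∫⁻ ω, W ω * eE ω ∂P := j2.symm
  have Ja := J aE (HAmeas.comp (measurable_filtr_X hin))
  have Jb := J bE (hIndmeas.comp (measurable_filtr_X hin))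
  have prodReal : ∀ U V : Ω → ℝ≥0∞, Measurable U → Measurable V → (∀ ω, U ω ≤ 1)
      → (∀ ω, V ω ≤ 1) →
      ∫ ω, (U ω).toReal * (V ω).toReal ∂P = (∫⁻ ω, U ω * V ω ∂P).toReal := by
    intro U V hU hV hU1 hV1
    have hpt : ∀ ω, (U ω).toReal * (V ω).toReal = ((U ω) * (V ω)).toReal := fun ω =>
      (ENNReal.toReal_mul).symm
    simp only [hpt]
    exact integral_toReal (hU.mul hV).aemeasurable (Filter.Eventually.of_forall fun ω =>
      lt_of_le_of_lt (mul_le_one' (hU1 ω) (hV1 ω)) ENNReal.one_lt_top)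
  have haE1 : ∀ ω, aE ω ≤ 1 := fun ω => hHA1 _
  have hbE1 : ∀ ω, bE ω ≤ 1 := fun ω => hInd1 _
  have hcE1 : ∀ ω, cE ω ≤ 1 := fun ω => hHA1 _
  have heE1 : ∀ ω, eE ω ≤ 1 := fun ω => hInd1 _
  have e1 : ∫ ω, (aE ω).toReal * (cE ω).toReal ∂P = ∫ ω, (aE ω).toReal * (eE ω).toReal ∂P := by
    rw [prodReal aE cE haEm hcEm haE1 hcE1, prodReal aE eE haEm heEm haE1 heE1, Ja]
  have e2 : ∫ ω, (bE ω).toReal * (cE ω).toReal ∂P = ∫ ω, (bE ω).toReal * (eE ω).toReal ∂P := by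
    rw [prodReal bE cE hbEm hcEm hbE1 hcE1, prodReal bE eE hbEm heEm hbE1 heE1, Jb]
  -- identify real indicator with toReal of ennreal indicator
  have hind : ∀ (y : S), (A.indicator (fun _ => (1:ℝ≥0∞)) y).toReal
      = A.indicator (fun _ => (1:ℝ)) y := fun y => by
    by_cases h : y ∈ A <;> simp [Set.indicator_apply, h]
  have hintUV : ∀ U V : Ω → ℝ≥0∞, Measurable U → Measurable V → (∀ ω, U ω ≤ 1)
      → (∀ ω, V ω ≤ 1) → Integrable (fun ω => (U ω).toReal * (V ω).toReal) P := by
    intro U V hU hV hU1 hV1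
    refine integrable_of_bound (hU.ennreal_toReal.mul hV.ennreal_toReal).aestronglyMeasurable
      1 fun ω => ?_
    rw [abs_mul, abs_of_nonneg ENNReal.toReal_nonneg, abs_of_nonneg ENNReal.toReal_nonneg]
    refine mul_le_one₀ ?_ ENNReal.toReal_nonneg ?_
    · simpa using ENNReal.toReal_mono ENNReal.one_ne_top (hU1 ω)
    · simpa using ENNReal.toReal_mono ENNReal.one_ne_top (hV1 ω)
  have hexp : (fun ω => ((K (X i ω) A).toReal - A.indicator (fun _ => (1:ℝ)) (X i ω))
        * ((K (X n ω) A).toReal - A.indicator (fun _ => (1:ℝ)) (X n ω)))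
      = fun ω => ((aE ω).toReal * (cE ω).toReal - (aE ω).toReal * (eE ω).toReal)
        - ((bE ω).toReal * (cE ω).toReal - (bE ω).toReal * (eE ω).toReal) := by
    funext ω
    rw [haE, hbE, hcE, heE]
    simp only
    rw [← hind (X i ω), ← hind (X n ω)]
    ring
  have I1 := hintUV aE cE haEm hcEm haE1 hcE1
  have I2 := hintUV aE eE haEm heEm haE1 heE1
  have I3 := hintUV bE cE hbEm hcEm hbE1 hcE1
  have I4 := hintUV bE eE hbEm heEm hbE1 heE1
  have I12 : Integrable (fun ω => (aE ω).toReal * (cE ω).toReal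
      - (aE ω).toReal * (eE ω).toReal) P := I1.sub I2
  have I34 : Integrable (fun ω => (bE ω).toReal * (cE ω).toReal
      - (bE ω).toReal * (eE ω).toReal) P := I3.sub I4
  rw [hexp, integral_sub I12 I34, integral_sub I1 I2, integral_sub I3 I4, e1, e2]
  ring

end Aux5
set_option maxHeartbeats 2000000 in
theorem stmt_9 {Ω S : Type*} [MeasurableSpace Ω] [mS : MeasurableSpace S] [StandardBorelSpace S]
    (P : Measure Ω) [IsProbabilityMeasure P] (X : ℕ → Ω → S) (ν : Measure S)
    [IsProbabilityMeasure ν] (θ : ℝ) (hθ : 0 < θ) (K : S → Measure S)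
    (hL : MemL P X ν θ K) (μ : Ω → Measure S) (hμ : IsDirecting P X μ) :
    ∀ A : Set S, MeasurableSet A →
      (∀ᵐ ω ∂P, Tendsto
          (fun n : ℕ => (∑ i ∈ Finset.range n, (K (X i ω) A).toReal) / n)
          atTop (nhds ((μ ω A).toReal))) ∧
        ∀ᵐ ω ∂P, ∫⁻ x, K x A ∂(μ ω) = μ ω A := by
  obtain ⟨hc, G, hG⟩ := hL
  have hX := hc.1
  have hK := hG.2.1
  have hKp : ∀ x, IsProbabilityMeasure (K x) := hG.2.2.1
  have hA1 : ∀ B : Set S, MeasurableSet[mS] B → ∫⁻ x, K x B ∂ν = ν B := fun B hB =>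
    aux_rcd_lintegral (mS := mS) hG hB
  have hA2 : ∀ B : Set S, MeasurableSet[mS] B → ∀ᵐ x ∂ν, ∫⁻ y, K y B ∂(K x) = K x B :=
    fun B hB => aux_rcd_idem (mS := mS) hG hB
  clear hG G
  intro A hA
  have HAmeas : Measurable fun x => K x A := (Measure.measurable_coe hA).comp hK
  have hHA1 : ∀ x, K x A ≤ 1 := fun x => by haveI := hKp x; exact prob_le_one
  have hpart1 : ∀ᵐ ω ∂P, Tendsto
      (fun n : ℕ => (∑ i ∈ Finset.range n, (K (X i ω) A).toReal) / n)
      atTop (nhds ((∫⁻ x, K x A ∂(μ ω)).toReal)) := aux_avg_tendsto hμ hX HAmeas hHA1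
  have hdirA := hμ.2.2 A hA
  set d : ℕ → Ω → ℝ := fun j ω => (K (X j ω) A).toReal
    - A.indicator (fun _ => (1:ℝ)) (X j ω) with hd
  have hdm : ∀ j, Measurable (d j) := fun j =>
    ((HAmeas.comp (hX j)).ennreal_toReal).sub
      ((measurable_const.indicator hA).comp (hX j))
  have htR : ∀ x, (K x A).toReal ≤ 1 := fun x => by
    simpa using ENNReal.toReal_mono ENNReal.one_ne_top (hHA1 x)
  have hdb : ∀ j ω, |d j ω| ≤ 1 := by
    intro j ω
    rw [hd, abs_le]
    simp only
    have h1 := htR (X j ω)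
    have h2 := ENNReal.toReal_nonneg (a := K (X j ω) A)
    by_cases h : X j ω ∈ A
    · rw [Set.indicator_of_mem h]
      exact ⟨by linarith, by linarith⟩
    · rw [Set.indicator_of_notMem h]
      exact ⟨by linarith, by linarith⟩
  have hint : ∀ i j : ℕ, Integrable (fun ω => d i ω * d j ω) P := by
    intro i j
    refine integrable_of_bound ((hdm i).mul (hdm j)).aestronglyMeasurable 1 fun ω => ?_
    rw [abs_mul]
    calc |d i ω| * |d j ω| ≤ 1 * 1 :=
          mul_le_mul (hdb i ω) (hdb j ω) (abs_nonneg _) zero_le_one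
      _ = 1 := mul_one 1
  have horth : ∀ i j : ℕ, i ≠ j → ∫ ω, d i ω * d j ω ∂P = 0 := by
    intro i j hij
    rcases lt_or_gt_of_ne hij with h | h
    · exact aux_orth hc hθ hKp hK hA1 hA2 hA h
    · have h0 := aux_orth hc hθ hKp hK hA1 hA2 hA h
      rw [show (fun ω => d i ω * d j ω) = fun ω => d j ω * d i ω from
        funext fun ω => mul_comm _ _]
      exact h0
  have hvar : ∀ n : ℕ, 1 ≤ n →
      ∫ ω, ((∑ j ∈ Finset.range n, d j ω) / n)^2 ∂P ≤ 1 / n := by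
    intro n hn
    have hnR : (0:ℝ) < n := by exact_mod_cast hn
    have hexp : ∀ ω, ((∑ j ∈ Finset.range n, d j ω) / n)^2
        = (∑ j ∈ Finset.range n, ∑ k ∈ Finset.range n, d j ω * d k ω) / ((n:ℝ)^2) := by
      intro ω
      rw [div_pow, sq, Finset.sum_mul_sum]
    simp only [hexp]
    rw [integral_div, integral_finset_sum _ (fun j _ => integrable_finset_sum _
      (fun k _ => hint j k))]
    have hswap : ∀ j ∈ Finset.range n, ∫ ω, ∑ k ∈ Finset.range n, d j ω * d k ω ∂P
        = ∑ k ∈ Finset.range n, ∫ ω, d j ω * d k ω ∂P := fun j _ =>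
      integral_finset_sum _ (fun k _ => hint j k)
    rw [Finset.sum_congr rfl hswap]
    have hinner : ∀ j ∈ Finset.range n,
        ∑ k ∈ Finset.range n, ∫ ω, d j ω * d k ω ∂P ≤ 1 := by
      intro j hj
      rw [Finset.sum_eq_single_of_mem j hj (fun k _ hkj => horth j k (Ne.symm hkj))]
      have hsq : ∀ ω, d j ω * d j ω ≤ 1 := fun ω =>
        calc d j ω * d j ω = |d j ω| * |d j ω| := (abs_mul_abs_self _).symm
          _ ≤ 1 := mul_le_one₀ (hdb j ω) (abs_nonneg _) (hdb j ω)
      calc ∫ ω, d j ω * d j ω ∂P ≤ ∫ _ω, (1:ℝ) ∂P :=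
            integral_mono (hint j j) (integrable_const 1) hsq
        _ = 1 := by simp
    have hfinal : (∑ j ∈ Finset.range n, ∑ k ∈ Finset.range n, ∫ ω, d j ω * d k ω ∂P)
        ≤ (n:ℝ) := by
      calc _ ≤ ∑ _j ∈ Finset.range n, (1:ℝ) := Finset.sum_le_sum hinner
        _ = (n:ℝ) := by simp
    calc (∑ j ∈ Finset.range n, ∑ k ∈ Finset.range n, ∫ ω, d j ω * d k ω ∂P) / ((n:ℝ)^2)
        ≤ (n:ℝ) / ((n:ℝ)^2) := by
          rw [div_eq_mul_inv, div_eq_mul_inv]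
          exact mul_le_mul_of_nonneg_right hfinal (by positivity)
      _ = 1 / (n:ℝ) := by
          rw [sq, div_mul_eq_div_div, div_self (ne_of_gt hnR)]
  set Df : Ω → ℝ := fun ω => (∫⁻ x, K x A ∂(μ ω)).toReal - (μ ω A).toReal with hDf
  have hDmeas : Measurable Df :=
    (((Measure.measurable_lintegral HAmeas).comp hμ.1).ennreal_toReal).sub
      (((Measure.measurable_coe hA).comp hμ.1).ennreal_toReal)
  have hY : ∀ᵐ ω ∂P, Tendsto (fun n : ℕ => (∑ j ∈ Finset.range n, d j ω) / n) atTop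
      (nhds (Df ω)) := by
    filter_upwards [hpart1, hdirA] with ω h1 h2
    have hfn : (fun n : ℕ => (∑ j ∈ Finset.range n, d j ω) / n)
        = fun n : ℕ => (∑ i ∈ Finset.range n, (K (X i ω) A).toReal) / n
          - (∑ i ∈ Finset.range n, A.indicator (fun _ => (1:ℝ)) (X i ω)) / n := by
      funext n
      rw [hd]
      rw [Finset.sum_sub_distrib, _root_.sub_div]
    rw [hfn, hDf]
    exact h1.sub h2
  have hYm : ∀ n : ℕ, Measurable fun ω => (∑ j ∈ Finset.range n, d j ω) / (n:ℝ) := fun n =>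
    (Finset.measurable_sum _ fun j _ => hdm j).div_const _
  have hYb : ∀ (n : ℕ) (ω : Ω), |(∑ j ∈ Finset.range n, d j ω) / (n:ℝ)| ≤ 1 := by
    intro n ω
    rcases Nat.eq_zero_or_pos n with h | h
    · subst h; simp
    · have hnR : (0:ℝ) < n := by exact_mod_cast h
      rw [abs_div, abs_of_nonneg hnR.le, div_le_one hnR]
      calc |∑ j ∈ Finset.range n, d j ω| ≤ ∑ j ∈ Finset.range n, |d j ω| :=
            Finset.abs_sum_le_sum_abs _ _
        _ ≤ ∑ _j ∈ Finset.range n, (1:ℝ) := Finset.sum_le_sum fun j _ => hdb j ω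
        _ = (n:ℝ) := by simp
  have hYint : ∀ n : ℕ, Integrable (fun ω => ((∑ j ∈ Finset.range n, d j ω) / (n:ℝ))^2) P := by
    intro n
    refine integrable_of_bound ((hYm n).pow_const 2).aestronglyMeasurable 1 fun ω => ?_
    rw [abs_pow]
    calc |(∑ j ∈ Finset.range n, d j ω) / (n:ℝ)|^2 ≤ 1^2 := by
          have := hYb n ω
          nlinarith [abs_nonneg ((∑ j ∈ Finset.range n, d j ω) / (n:ℝ))]
      _ = 1 := one_pow 2
  have hD0 : ∀ᵐ ω ∂P, Df ω = 0 := by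
    have key : ∫⁻ ω, ENNReal.ofReal ((Df ω)^2) ∂P = 0 := by
      refine le_antisymm ?_ zero_le
      have step1 : ∫⁻ ω, ENNReal.ofReal ((Df ω)^2) ∂P
          ≤ liminf (fun n : ℕ =>
            ∫⁻ ω, ENNReal.ofReal (((∑ j ∈ Finset.range n, d j ω) / n)^2) ∂P) atTop := by
        have hcongr : ∫⁻ ω, ENNReal.ofReal ((Df ω)^2) ∂P
            = ∫⁻ ω, liminf (fun n : ℕ =>
              ENNReal.ofReal (((∑ j ∈ Finset.range n, d j ω) / n)^2)) atTop ∂P := by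
          refine lintegral_congr_ae ?_
          filter_upwards [hY] with ω hω
          have htd : Tendsto (fun n : ℕ =>
              ENNReal.ofReal (((∑ j ∈ Finset.range n, d j ω) / n)^2)) atTop
              (nhds (ENNReal.ofReal ((Df ω)^2))) :=
            (ENNReal.continuous_ofReal.tendsto _).comp (hω.pow 2)
          exact htd.liminf_eq.symm
        rw [hcongr]
        exact lintegral_liminf_le fun n => ((hYm n).pow_const 2).ennreal_ofReal
      refine le_trans step1 ?_
      have step2 : liminf (fun n : ℕ =>
          ∫⁻ ω, ENNReal.ofReal (((∑ j ∈ Finset.range n, d j ω) / n)^2) ∂P) atTop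
          ≤ liminf (fun n : ℕ => ENNReal.ofReal (1/(n:ℝ))) atTop := by
        refine liminf_le_liminf ?_
        filter_upwards [eventually_ge_atTop 1] with n hn
        rw [← ofReal_integral_eq_lintegral_ofReal (hYint n)
          (Filter.Eventually.of_forall fun ω => sq_nonneg _)]
        exact ENNReal.ofReal_le_ofReal (hvar n hn)
      refine le_trans step2 ?_
      have step3 : Tendsto (fun n : ℕ => ENNReal.ofReal (1/(n:ℝ))) atTop (nhds 0) := by
        have h0 := tendsto_one_div_atTop_nhds_zero_nat (𝕜 := ℝ)
        have := (ENNReal.continuous_ofReal.tendsto 0).comp h0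
        simpa [Function.comp_def] using this
      rw [step3.liminf_eq]
    have h0 := (lintegral_eq_zero_iff (hDmeas.pow_const 2).ennreal_ofReal).1 key
    filter_upwards [h0] with ω h
    have h2 : (Df ω)^2 ≤ 0 := ENNReal.ofReal_eq_zero.1 h
    have h3 : (Df ω)^2 = 0 := le_antisymm h2 (sq_nonneg _)
    exact pow_eq_zero_iff two_ne_zero |>.1 h3
  have hfin1 : ∀ ω, ∫⁻ x, K x A ∂(μ ω) ≠ ∞ := fun ω => by
    haveI := hμ.2.1 ω
    refine ne_top_of_le_ne_top ENNReal.one_ne_top ?_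
    calc ∫⁻ x, K x A ∂(μ ω) ≤ ∫⁻ _x, 1 ∂(μ ω) := lintegral_mono hHA1
      _ = 1 := by simp
  constructor
  · filter_upwards [hpart1, hD0] with ω h1 h2
    have heq : (∫⁻ x, K x A ∂(μ ω)).toReal = (μ ω A).toReal := by
      rw [hDf] at h2
      simp only at h2
      linarith
    rwa [heq] at h1
  · filter_upwards [hD0] with ω h2
    haveI := hμ.2.1 ω
    have heq : (∫⁻ x, K x A ∂(μ ω)).toReal = (μ ω A).toReal := by
      rw [hDf] at h2
      simp only at h2
      linarith
    exact (ENNReal.toReal_eq_toReal_iff' (hfin1 ω) (measure_ne_top _ _)).1 heq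

end
end

section
/- Let S be a Polish space and equip P(S) with the topology of weak convergence (the weakest topology making p ↦ ∫ f dp continuous for every bounded continuous f : S → ℝ). Suppose X ∈ L and that the prior Π, defined by Π(C) = P(μ ∈ C) for C ∈ C, has full topological support, i.e. Π(U) > 0 for every nonempty open set U ⊆ P(S). Then ν({x ∈ S : K(x)(A) ≤ u}) < 1 for every u < 1 and every nonempty open set A ⊆ S. -/
open MeasureTheory ProbabilityTheory Filter Set ENNReal NNReal

noncomputable section

variable {Ω S : Type*}

set_option linter.unusedSectionVars false in
set_option linter.unusedVariables false in
lemma filtr_le_aux [m0 : MeasurableSpace Ω] [mS : MeasurableSpace S]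
    (X : ℕ → Ω → S) (hX : ∀ n, Measurable (X n)) (n : ℕ) :
    Filtr (mS := mS) X n ≤ m0 :=
  iSup_le fun i => (hX (i : ℕ)).comap_le

set_option linter.unusedSectionVars false in
lemma filtr_mono_aux [m0 : MeasurableSpace Ω] [mS : MeasurableSpace S]
    (X : ℕ → Ω → S) : Monotone (Filtr (mS := mS) X) :=
  fun n m h => iSup_le fun i =>
    le_iSup_of_le (⟨(i : ℕ), lt_of_lt_of_le i.isLt h⟩ : Fin m) le_rfl

set_option linter.unusedSectionVars false in
lemma measurable_X_filtr [m0 : MeasurableSpace Ω] [mS : MeasurableSpace S]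
    (X : ℕ → Ω → S) {i n : ℕ} (h : i < n) :
    Measurable[Filtr (mS := mS) X n] (X i) :=
  Measurable.of_comap_le (le_iSup_of_le (⟨i, h⟩ : Fin n) le_rfl)

/-- Under condition (1.1) with an r.c.d. kernel, each `X i` avoids every `ν`-null set. -/
lemma null_preserved_aux [m0 : MeasurableSpace Ω] [mS : MeasurableSpace S]
    {P : Measure Ω} [IsProbabilityMeasure P]
    {X : ℕ → Ω → S} {ν : Measure S} [IsProbabilityMeasure ν] {θ : ℝ}
    {K : S → Measure S} (hL : MemL P X ν θ K) :
    ∀ i, ∀ N : Set S, MeasurableSet N → ν N = 0 → P (X i ⁻¹' N) = 0 := by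
  have hKmeas : Measurable K := hL.2.choose_spec.2.1
  have hdisint : ∀ N : Set S, MeasurableSet N → ν N = ∫⁻ x, K x N ∂ν := by
    intro N hN
    obtain ⟨G, hGle, hKm, hKprob, hKGmeas, hKrcd⟩ := hL.2
    have huniv : MeasurableSet[G] (Set.univ : Set S) := by
      have h1 : MeasurableSet[G] (∅ : Set S)ᶜ := MeasurableSet.compl (@MeasurableSet.empty S G)
      simpa using h1
    have h := hKrcd N hN Set.univ huniv
    rw [Set.inter_univ] at h
    simpa [Measure.restrict_univ] using h
  obtain ⟨hXmeas, hX0, hpred⟩ := hL.1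
  intro i
  induction i using Nat.strong_induction_on with
  | _ i IH =>
    intro N hN hνN
    rcases Nat.eq_zero_or_pos i with rfl | hi
    · rw [← hX0, Measure.map_apply (hXmeas 0) hN] at hνN
      exact hνN
    · have hKN : Measurable fun x => K x N := (Measure.measurable_coe hN).comp hKmeas
      have hint : ∫⁻ x, K x N ∂ν = 0 := by
        rw [← hdisint N hN]; exact hνN
      have haeK0 : (fun x => K x N) =ᵐ[ν] 0 := (lintegral_eq_zero_iff hKN).mp hint
      have haeK : ∀ᵐ x ∂ν, K x N = 0 := by
        filter_upwards [haeK0] with x hx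
        simpa using hx
      have hJmeas : MeasurableSet {x | K x N ≠ 0} :=
        (hKN (measurableSet_singleton 0)).compl
      have hJν : ν {x | K x N ≠ 0} = 0 := by
        rw [ae_iff] at haeK
        exact haeK
      have h0 : ∀ᵐ ω ∂P, ∀ j, j < i → K (X j ω) N = 0 := by
        rw [ae_all_iff]
        intro j
        by_cases hj : j < i
        · have hm := measure_eq_zero_iff_ae_notMem.mp (IH j hj _ hJmeas hJν)
          filter_upwards [hm] with ω hω _
          by_contra hne
          exact hω hne
        · filter_upwards with ω hj'
          exact absurd hj' hj
      have hzero : (fun ω => predReal X ν θ K i ω N) =ᵐ[P] fun _ => (0 : ℝ) := by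
        filter_upwards [h0] with ω hω
        have hsum : ∑ j ∈ Finset.range i, (K (X j ω) N).toReal = 0 := by
          apply Finset.sum_eq_zero
          intro j hj
          rw [hω j (Finset.mem_range.mp hj)]
          simp
        simp [predReal, hνN, hsum]
      have hEq : ∫ ω, ((X i ⁻¹' N).indicator (fun _ => (1 : ℝ))) ω ∂P = 0 := by
        rw [← integral_condExp (filtr_le_aux X hXmeas i)]
        rw [integral_congr_ae ((hpred i hi N hN).trans hzero)]
        simp
      rw [integral_indicator_const (1 : ℝ) ((hXmeas i) hN)] at hEq
      have htr : (P (X i ⁻¹' N)).toReal = 0 := by simpa [measureReal_def] using hEq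
      exact ((ENNReal.toReal_eq_zero_iff _).mp htr).resolve_right (measure_ne_top P _)

theorem stmt_18 {Ω S : Type*} [MeasurableSpace Ω] [TopologicalSpace S] [PolishSpace S]
    [mS : MeasurableSpace S] [BorelSpace S]
    (P : Measure Ω) [IsProbabilityMeasure P] (X : ℕ → Ω → S) (ν : Measure S)
    [IsProbabilityMeasure ν] (θ : ℝ) (hθ : 0 < θ) (K : S → Measure S)
    (hL : MemL P X ν θ K) (μ : Ω → Measure S) (hμ : IsDirecting P X μ)
    (hfull : ∀ U : Set (ProbabilityMeasure S), IsOpen U → U.Nonempty →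
      0 < P {ω | (⟨μ ω, hμ.2.1 ω⟩ : ProbabilityMeasure S) ∈ U}) :
    ∀ u : ℝ≥0∞, u < 1 → ∀ A : Set S, IsOpen A → A.Nonempty →
      ν {x | K x A ≤ u} < 1 := by
  classical
  intro u hu A hAopen hAne
  by_contra hcon
  push_neg at hcon
  have hnull := null_preserved_aux (mS := mS) hL
  have hKmeas : Measurable K := hL.2.choose_spec.2.1
  obtain ⟨hXmeas, hX0, hpred⟩ := hL.1
  have hA : MeasurableSet A := hAopen.measurableSet
  have hμmeas : Measurable μ := hμ.1
  have hμprob : ∀ ω, IsProbabilityMeasure (μ ω) := hμ.2.1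
  have hFle := filtr_le_aux (mS := mS) X hXmeas
  set b : ℝ := u.toReal with hbdef
  have hb0 : (0:ℝ) ≤ b := ENNReal.toReal_nonneg
  have hb1 : b < 1 := by
    have h := (ENNReal.toReal_lt_toReal (ne_top_of_lt hu) (by simp : (1:ℝ≥0∞) ≠ ⊤)).mpr hu
    simpa using h
  have hKA : Measurable fun x => K x A := (Measure.measurable_coe hA).comp hKmeas
  have hKleMeas : MeasurableSet {x | K x A ≤ u} := measurableSet_le hKA measurable_const
  have hone : ν {x | K x A ≤ u} = 1 := le_antisymm prob_le_one hcon
  have hbadν : ν {x | K x A ≤ u}ᶜ = 0 := (prob_compl_eq_zero_iff hKleMeas).mpr hone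
  have hKb : ∀ᵐ ω ∂P, ∀ j : ℕ, K (X j ω) A ≤ u := by
    rw [ae_all_iff]
    intro j
    have h := measure_eq_zero_iff_ae_notMem.mp (hnull j _ hKleMeas.compl hbadν)
    filter_upwards [h] with ω hω
    by_contra hx
    exact hω hx
  -- the directing random measure evaluated at `A`, and the empirical frequencies
  set Y : Ω → ℝ := fun ω => (μ ω A).toReal with hYdef
  have hYmeas : Measurable Y := ((Measure.measurable_coe hA).comp hμmeas).ennreal_toReal
  have hYbd : ∀ ω, Y ω ∈ Set.Icc (0:ℝ) 1 := by
    intro ω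
    haveI := hμprob ω
    refine ⟨ENNReal.toReal_nonneg, ?_⟩
    calc (μ ω A).toReal ≤ (1:ℝ≥0∞).toReal := ENNReal.toReal_mono one_ne_top prob_le_one
      _ = 1 := ENNReal.toReal_one
  have hYint : Integrable Y P :=
    (integrable_const (1:ℝ)).mono' hYmeas.aestronglyMeasurable
      (Filter.Eventually.of_forall fun ω => by
        rw [Real.norm_eq_abs, abs_of_nonneg (hYbd ω).1]; exact (hYbd ω).2)
  set Ym : ℕ → Ω → ℝ :=
    fun m ω => (∑ i ∈ Finset.range m, A.indicator (fun _ => (1:ℝ)) (X i ω)) / (m:ℝ) with hYmdef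
  have hYtend : ∀ᵐ ω ∂P, Tendsto (fun m => Ym m ω) atTop (nhds (Y ω)) := hμ.2.2 A hA
  have hYm_bd : ∀ m ω, Ym m ω ∈ Set.Icc (0:ℝ) 1 := by
    intro m ω
    constructor
    · apply div_nonneg _ (Nat.cast_nonneg m)
      apply Finset.sum_nonneg
      intro i _
      by_cases h : X i ω ∈ A <;> simp [Set.indicator_apply, h]
    · rcases Nat.eq_zero_or_pos m with rfl | hm
      · simp [hYmdef]
      · have hmpos : (0:ℝ) < (m:ℝ) := by exact_mod_cast hm
        rw [hYmdef]
        simp only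
        rw [div_le_one hmpos]
        calc ∑ i ∈ Finset.range m, A.indicator (fun _ => (1:ℝ)) (X i ω)
            ≤ ∑ _i ∈ Finset.range m, (1:ℝ) := by
              refine Finset.sum_le_sum fun i _ => ?_
              by_cases h : X i ω ∈ A <;> simp [Set.indicator_apply, h]
          _ = (m:ℝ) := by simp
  have hYm_meas : ∀ m, Measurable (Ym m) := by
    intro m
    apply Measurable.div_const
    exact Finset.measurable_sum _ fun i _ => (measurable_const.indicator hA).comp (hXmeas i)
  have hYm_measF : ∀ m, Measurable[⨆ n, Filtr (mS := mS) X n] (Ym m) := by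
    intro m
    apply Measurable.div_const
    apply Finset.measurable_sum
    intro i hi
    have h1 : Measurable[Filtr (mS := mS) X m] (X i) :=
      measurable_X_filtr X (Finset.mem_range.mp hi)
    exact ((measurable_const.indicator hA).comp h1).mono (le_iSup _ m) le_rfl
  -- key set-integral estimate: `∫_G Y ≤ b · P(G)` for `G` in any `Filtr X n`
  have hsetY : ∀ n : ℕ, ∀ Gs : Set Ω, MeasurableSet[Filtr (mS := mS) X n] Gs →
      ∫ ω in Gs, Y ω ∂P ≤ b * (P Gs).toReal := by
    intro n Gs hGs
    have hGm : MeasurableSet Gs := hFle n _ hGs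
    set PGr : ℝ := (P Gs).toReal with hPGr
    have hPGr0 : (0:ℝ) ≤ PGr := ENNReal.toReal_nonneg
    have hPGr1 : PGr ≤ 1 := by
      rw [hPGr]
      calc (P Gs).toReal ≤ (1:ℝ≥0∞).toReal := ENNReal.toReal_mono one_ne_top prob_le_one
        _ = 1 := ENNReal.toReal_one
    set n₀ : ℕ := max n 1 with hn₀def
    set c : ℕ → ℝ := fun i => ∫ ω in Gs, A.indicator (fun _ => (1:ℝ)) (X i ω) ∂P with hcdef
    have hIntComp : ∀ i : ℕ, Integrable (fun ω => A.indicator (fun _ => (1:ℝ)) (X i ω)) P := by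
      intro i
      refine (integrable_const (1:ℝ)).mono'
        (((measurable_const.indicator hA).comp (hXmeas i)).aestronglyMeasurable)
        (Filter.Eventually.of_forall fun ω => ?_)
      by_cases h : X i ω ∈ A <;> simp [Set.indicator_apply, h]
    have hc_le : ∀ i, c i ≤ PGr := by
      intro i
      have h1 : ∫ ω in Gs, A.indicator (fun _ => (1:ℝ)) (X i ω) ∂P ≤ ∫ _ω in Gs, (1:ℝ) ∂P := by
        refine setIntegral_mono ((hIntComp i).integrableOn) (integrable_const 1).integrableOn ?_
        intro ω
        by_cases h : X i ω ∈ A <;> simp [Set.indicator_apply, h]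
      rw [setIntegral_const, smul_eq_mul, mul_one] at h1
      exact h1
    have hcomp : ∀ i : ℕ, (fun ω => A.indicator (fun _ => (1:ℝ)) (X i ω))
        = ((X i ⁻¹' A).indicator (fun _ => (1:ℝ))) := by
      intro i; funext ω
      by_cases h : X i ω ∈ A <;> simp [Set.indicator_apply, Set.mem_preimage, h]
    have hkey : ∀ i : ℕ, n₀ ≤ i → c i ≤ b * PGr + θ / ((i:ℝ) + θ) := by
      intro i hi
      have hi1 : 1 ≤ i := le_trans (le_max_right n 1) hi
      have hden : (0:ℝ) < (i:ℝ) + θ := by positivity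
      have hGi : MeasurableSet[Filtr (mS := mS) X i] Gs :=
        filtr_mono_aux X (le_trans (le_max_left n 1) hi) Gs hGs
      have hIndInt : Integrable ((X i ⁻¹' A).indicator (fun _ => (1:ℝ))) P :=
        (integrable_const (1:ℝ)).indicator ((hXmeas i) hA)
      have hceq : c i
          = ∫ ω in Gs, (P[((X i) ⁻¹' A).indicator (fun _ => (1:ℝ)) | Filtr (mS := mS) X i]) ω ∂P := by
        rw [setIntegral_condExp (hFle i) hIndInt hGi, hcdef]
        simp only [hcomp i]
      have hbnd : (P[((X i) ⁻¹' A).indicator (fun _ => (1:ℝ)) | Filtr (mS := mS) X i])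
          ≤ᵐ[P] fun _ => (θ + (i:ℝ) * b) / ((i:ℝ) + θ) := by
        filter_upwards [hpred i hi1 A hA, hKb] with ω hω hKω
        rw [hω]
        show (θ * (ν A).toReal + ∑ j ∈ Finset.range i, (K (X j ω) A).toReal) / ((i:ℝ) + θ) ≤ _
        have hν1 : (ν A).toReal ≤ 1 := by
          calc (ν A).toReal ≤ (1:ℝ≥0∞).toReal := ENNReal.toReal_mono one_ne_top prob_le_one
            _ = 1 := ENNReal.toReal_one
        have hsum : ∑ j ∈ Finset.range i, (K (X j ω) A).toReal ≤ (i:ℝ) * b := by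
          calc ∑ j ∈ Finset.range i, (K (X j ω) A).toReal
              ≤ ∑ _j ∈ Finset.range i, b :=
                Finset.sum_le_sum fun j _ => ENNReal.toReal_mono (ne_top_of_lt hu) (hKω j)
            _ = (i:ℝ) * b := by simp [Finset.sum_const, nsmul_eq_mul]
        have hmul := mul_le_mul_of_nonneg_left hν1 hθ.le
        rw [div_le_div_iff₀ hden hden]
        nlinarith
      have h2 : c i ≤ ((θ + (i:ℝ) * b) / ((i:ℝ) + θ)) * PGr := by
        rw [hceq]
        have hstep := setIntegral_mono_ae (s := Gs)
          integrable_condExp.integrableOn (integrable_const _).integrableOn hbnd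
        rw [setIntegral_const, smul_eq_mul, measureReal_def] at hstep
        have hcomm : (P Gs).toReal * ((θ + (i:ℝ) * b) / ((i:ℝ) + θ))
            = ((θ + (i:ℝ) * b) / ((i:ℝ) + θ)) * PGr := by rw [hPGr]; ring
        linarith
      have h3 : (θ + (i:ℝ) * b) / ((i:ℝ) + θ) ≤ b + θ / ((i:ℝ) + θ) := by
        rw [div_le_iff₀ hden, add_mul, div_mul_cancel₀ _ hden.ne']
        nlinarith [mul_nonneg hb0 hθ.le]
      have h4 : ((θ + (i:ℝ) * b) / ((i:ℝ) + θ)) * PGr ≤ (b + θ / ((i:ℝ) + θ)) * PGr :=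
        mul_le_mul_of_nonneg_right h3 hPGr0
      have h6 : (θ / ((i:ℝ) + θ)) * PGr ≤ (θ / ((i:ℝ) + θ)) * 1 :=
        mul_le_mul_of_nonneg_left hPGr1 (by positivity)
      nlinarith
    have hsum : ∀ m : ℕ, ∑ i ∈ Finset.range m, c i
        ≤ (n₀:ℝ) + ∑ i ∈ Finset.range m, (b * PGr + θ / ((i:ℝ) + θ)) := by
      intro m
      have h1 : ∀ i ∈ Finset.range m,
          c i ≤ (b * PGr + θ / ((i:ℝ) + θ)) + (if i < n₀ then (1:ℝ) else 0) := by
        intro i _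
        by_cases hi : i < n₀
        · have h2 : c i ≤ 1 := le_trans (hc_le i) hPGr1
          have h3 : (0:ℝ) ≤ b * PGr + θ / ((i:ℝ) + θ) :=
            add_nonneg (mul_nonneg hb0 hPGr0) (div_nonneg hθ.le (by positivity))
          simp only [hi, if_true]
          linarith
        · simp only [hi, if_false, add_zero]
          exact hkey i (le_of_not_gt hi)
      have h2 := Finset.sum_le_sum h1
      rw [Finset.sum_add_distrib] at h2
      have h3 : ∑ i ∈ Finset.range m, (if i < n₀ then (1:ℝ) else 0) ≤ (n₀:ℝ) := by
        have hsub : (Finset.range m).filter (fun i => i < n₀) ⊆ Finset.range n₀ := by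
          intro x hx
          rw [Finset.mem_filter] at hx
          exact Finset.mem_range.mpr hx.2
        calc ∑ i ∈ Finset.range m, (if i < n₀ then (1:ℝ) else 0)
            = (((Finset.range m).filter (fun i => i < n₀)).card : ℝ) := by
              rw [Finset.sum_boole]
          _ ≤ ((Finset.range n₀).card : ℝ) := by exact_mod_cast Finset.card_le_card hsub
          _ = (n₀:ℝ) := by simp
      linarith
    have hbm : ∀ m : ℕ, ∫ ω in Gs, Ym m ω ∂P
        ≤ ((n₀:ℝ) + ∑ i ∈ Finset.range m, (b * PGr + θ / ((i:ℝ) + θ))) / (m:ℝ) := by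
      intro m
      have hint_eq : ∫ ω in Gs, Ym m ω ∂P = (∑ i ∈ Finset.range m, c i) / (m:ℝ) := by
        show (∫ ω in Gs,
            (∑ i ∈ Finset.range m, A.indicator (fun _ => (1:ℝ)) (X i ω)) / (m:ℝ) ∂P) = _
        rw [integral_div]
        congr 1
        rw [integral_finset_sum _ (fun i _ => (hIntComp i).integrableOn)]
      rcases Nat.eq_zero_or_pos m with rfl | hm
      · rw [hint_eq]; simp
      · rw [hint_eq]
        have hmpos : (0:ℝ) < (m:ℝ) := by exact_mod_cast hm
        exact (div_le_div_iff_of_pos_right hmpos).mpr (hsum m)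
    have hDCT : Tendsto (fun m => ∫ ω in Gs, Ym m ω ∂P) atTop (nhds (∫ ω in Gs, Y ω ∂P)) := by
      refine tendsto_integral_of_dominated_convergence (fun _ => (1:ℝ))
        (fun m => (hYm_meas m).aestronglyMeasurable.restrict) (integrable_const 1)
        (fun m => Filter.Eventually.of_forall fun ω => ?_) (ae_restrict_of_ae hYtend)
      rw [Real.norm_eq_abs, abs_of_nonneg (hYm_bd m ω).1]
      exact (hYm_bd m ω).2
    have hlim : Tendsto
        (fun m : ℕ => ((n₀:ℝ) + ∑ i ∈ Finset.range m, (b * PGr + θ / ((i:ℝ) + θ))) / (m:ℝ))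
        atTop (nhds (b * PGr)) := by
      have h2 : Tendsto (fun i : ℕ => θ / ((i:ℝ) + θ)) atTop (nhds 0) :=
        Filter.Tendsto.div_atTop tendsto_const_nhds
          (Filter.tendsto_atTop_add_const_right atTop θ tendsto_natCast_atTop_atTop)
      have h1 : Tendsto (fun i : ℕ => b * PGr + θ / ((i:ℝ) + θ)) atTop (nhds (b * PGr)) := by
        simpa using tendsto_const_nhds.add h2
      have h3 := h1.cesaro
      have h4 : Tendsto (fun m : ℕ => (n₀:ℝ) / (m:ℝ)) atTop (nhds 0) :=
        tendsto_const_div_atTop_nhds_zero_nat _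
      have h5 := h4.add h3
      rw [zero_add] at h5
      refine h5.congr fun m => ?_
      rw [add_div]
      congr 1
      rw [div_eq_inv_mul]
    exact le_of_tendsto_of_tendsto' hDCT hlim hbm
  -- conditional expectation bound `E[Y | Filtr X n] ≤ b` a.s.
  have hcond : ∀ n : ℕ, (P[Y | Filtr (mS := mS) X n]) ≤ᵐ[P] fun _ => b := by
    intro n
    set g : Ω → ℝ := P[Y | Filtr (mS := mS) X n] with hgdef
    have hgsm : StronglyMeasurable[Filtr (mS := mS) X n] g := stronglyMeasurable_condExp
    set G₀ : Set Ω := {ω | b < g ω} with hG₀def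
    have hG₀F : MeasurableSet[Filtr (mS := mS) X n] G₀ :=
      measurableSet_lt measurable_const hgsm.measurable
    have hG₀m : MeasurableSet G₀ := hFle n _ hG₀F
    have h1 : ∫ ω in G₀, g ω ∂P = ∫ ω in G₀, Y ω ∂P :=
      setIntegral_condExp (hFle n) hYint hG₀F
    have h2 : ∫ ω in G₀, Y ω ∂P ≤ b * (P G₀).toReal := hsetY n G₀ hG₀F
    have h3 : ∫ ω in G₀, (g ω - b) ∂P ≤ 0 := by
      rw [integral_sub integrable_condExp.integrableOn (integrable_const b).integrableOn]
      rw [setIntegral_const, smul_eq_mul, measureReal_def]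
      rw [h1]
      nlinarith
    have h4 : (0:Ω → ℝ) ≤ᵐ[P.restrict G₀] fun ω => g ω - b := by
      filter_upwards [ae_restrict_mem hG₀m] with ω hω
      have hb' : b < g ω := hω
      simp only [Pi.zero_apply]
      linarith
    have h5 : ∫ ω in G₀, (g ω - b) ∂P = 0 :=
      le_antisymm h3 (integral_nonneg_of_ae h4)
    have h6 : (fun ω => g ω - b) =ᵐ[P.restrict G₀] 0 :=
      (integral_eq_zero_iff_of_nonneg_ae h4
        ((integrable_condExp.sub (integrable_const b)).integrableOn)).mp h5
    have h7 : P G₀ = 0 := by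
      have h8 : ∀ᵐ ω ∂P.restrict G₀, False := by
        filter_upwards [h6, ae_restrict_mem hG₀m] with ω hω hmem
        have hb' : b < g ω := hmem
        have hz : g ω - b = 0 := hω
        linarith
      have h9 : (P.restrict G₀) Set.univ = 0 := by
        simpa [ae_iff] using h8
      simpa [Measure.restrict_apply_univ] using h9
    have h10 : ∀ᵐ ω ∂P, ω ∉ G₀ := measure_eq_zero_iff_ae_notMem.mp h7
    filter_upwards [h10] with ω hω
    exact not_lt.mp hω
  -- Lévy upward convergence
  set ℱ : Filtration ℕ ‹MeasurableSpace Ω› :=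
    { seq := fun n => Filtr (mS := mS) X n, mono' := filtr_mono_aux X, le' := hFle } with hℱdef
  set Y' : Ω → ℝ := fun ω => limsup (fun m => Ym m ω) atTop with hY'def
  have hY'measF : Measurable[⨆ n, Filtr (mS := mS) X n] Y' := Measurable.limsup hYm_measF
  have hY'eq : Y' =ᵐ[P] Y := by
    filter_upwards [hYtend] with ω h
    exact h.limsup_eq
  have hY'int : Integrable Y' P := hYint.congr hY'eq.symm
  have hY'sm : StronglyMeasurable[⨆ n, ℱ n] Y' := hY'measF.stronglyMeasurable
  have hlevy := hY'int.tendsto_ae_condExp hY'sm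
  have hcond' : ∀ n : ℕ, ∀ᵐ ω ∂P, (P[Y' | ℱ n]) ω ≤ b := by
    intro n
    have h1 : P[Y' | ℱ n] =ᵐ[P] P[Y | Filtr (mS := mS) X n] := condExp_congr_ae hY'eq
    filter_upwards [h1, hcond n] with ω h1ω h2ω
    rw [h1ω]
    exact h2ω
  have hYleb : ∀ᵐ ω ∂P, Y ω ≤ b := by
    have hall : ∀ᵐ ω ∂P, ∀ n, (P[Y' | ℱ n]) ω ≤ b := ae_all_iff.mpr hcond'
    filter_upwards [hlevy, hall, hY'eq] with ω h1 h2 h3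
    rw [← h3]
    exact le_of_tendsto' h1 h2
  -- build a bounded continuous test function supported in `A` and equal to `1` at a point of `A`
  letI := TopologicalSpace.upgradeIsCompletelyMetrizable S
  obtain ⟨a, haA⟩ := hAne
  obtain ⟨f, hf0, hf1, hf01⟩ :=
    exists_continuous_zero_one_of_isClosed (isClosed_compl_iff.mpr hAopen)
      isClosed_singleton (Set.disjoint_singleton_right.mpr (Set.notMem_compl_iff.mpr haA))
  have hfb : ∃ fb : BoundedContinuousFunction S ℝ≥0, fb a = 1 ∧
      ∀ x, (fb x : ℝ≥0∞) ≤ A.indicator (fun _ => (1:ℝ≥0∞)) x := by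
    refine ⟨⟨⟨fun x => Real.toNNReal (f x), continuous_real_toNNReal.comp f.continuous⟩,
      ⟨1, fun x y => ?_⟩⟩, ?_, ?_⟩
    · rw [NNReal.dist_eq]
      simp only [ContinuousMap.coe_mk]
      rw [Real.coe_toNNReal _ (hf01 x).1, Real.coe_toNNReal _ (hf01 y).1]
      rw [abs_le]
      constructor
      · nlinarith [(hf01 x).1, (hf01 y).2]
      · nlinarith [(hf01 y).1, (hf01 x).2]
    · show Real.toNNReal (f a) = 1
      rw [hf1 (Set.mem_singleton a)]
      simp [Real.toNNReal_one]
    · intro x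
      by_cases hx : x ∈ A
      · rw [Set.indicator_of_mem hx]
        show ((Real.toNNReal (f x) : ℝ≥0) : ℝ≥0∞) ≤ 1
        rw [← ENNReal.coe_one, ENNReal.coe_le_coe, ← Real.toNNReal_one]
        exact Real.toNNReal_mono (hf01 x).2
      · rw [Set.indicator_of_notMem hx]
        show ((Real.toNNReal (f x) : ℝ≥0) : ℝ≥0∞) ≤ 0
        have hfx : f x = 0 := hf0 hx
        simp [hfx]
  obtain ⟨fb, hfba, hfble⟩ := hfb
  have hfbmeas : Measurable fun x => (fb x : ℝ≥0∞) :=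
    measurable_coe_nnreal_ennreal.comp fb.continuous.measurable
  set u2 : ℝ := (b + 1) / 2 with hu2def
  have hbu2 : b < u2 := by rw [hu2def]; linarith
  have hu21 : u2 < 1 := by rw [hu2def]; linarith
  have hu20 : (0:ℝ) ≤ u2 := by rw [hu2def]; linarith
  set u2n : ℝ≥0 := Real.toNNReal u2 with hu2ndef
  set U : Set (ProbabilityMeasure S) :=
    {p | u2n < p.toFiniteMeasure.testAgainstNN fb} with hUdef
  have hUopen : IsOpen U :=
    isOpen_lt continuous_const (ProbabilityMeasure.continuous_testAgainstNN_eval fb)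
  have hUne : U.Nonempty := by
    set pa : ProbabilityMeasure S := ⟨Measure.dirac a, inferInstance⟩ with hpadef
    refine ⟨pa, ?_⟩
    show u2n < (ProbabilityMeasure.toFiniteMeasure pa).testAgainstNN fb
    rw [← ENNReal.coe_lt_coe, FiniteMeasure.testAgainstNN_coe_eq]
    have hdirac : ∫⁻ x, (fb x : ℝ≥0∞)
        ∂((ProbabilityMeasure.toFiniteMeasure pa : FiniteMeasure S) : Measure S)
        = (fb a : ℝ≥0∞) := lintegral_dirac' a hfbmeas
    rw [hdirac, hfba]
    rw [ENNReal.coe_one, ← ENNReal.coe_one, ENNReal.coe_lt_coe, hu2ndef, ← Real.toNNReal_one]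
    exact (Real.toNNReal_lt_toNNReal_iff one_pos).mpr hu21
  have hpos := hfull U hUopen hUne
  have hsub : {ω | (⟨μ ω, hμ.2.1 ω⟩ : ProbabilityMeasure S) ∈ U} ⊆ {ω | ¬ Y ω ≤ b} := by
    intro ω hω
    have hω' : u2n < (ProbabilityMeasure.toFiniteMeasure
        (⟨μ ω, hμ.2.1 ω⟩ : ProbabilityMeasure S)).testAgainstNN fb := hω
    haveI := hμprob ω
    have hcoe : (((ProbabilityMeasure.toFiniteMeasure
        (⟨μ ω, hμ.2.1 ω⟩ : ProbabilityMeasure S)).testAgainstNN fb : ℝ≥0) : ℝ≥0∞)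
        = ∫⁻ x, (fb x : ℝ≥0∞) ∂(μ ω) := FiniteMeasure.testAgainstNN_coe_eq
    have hle1 : ∫⁻ x, (fb x : ℝ≥0∞) ∂(μ ω) ≤ μ ω A := by
      calc ∫⁻ x, (fb x : ℝ≥0∞) ∂(μ ω)
          ≤ ∫⁻ x, A.indicator (fun _ => (1:ℝ≥0∞)) x ∂(μ ω) := lintegral_mono hfble
        _ = μ ω A := lintegral_indicator_one hA
    have h2 : (u2n : ℝ≥0∞) < μ ω A := by
      have h3 := ENNReal.coe_lt_coe.mpr hω'
      rw [hcoe] at h3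
      exact lt_of_lt_of_le h3 hle1
    have hne : μ ω A ≠ ⊤ := (lt_of_le_of_lt prob_le_one one_lt_top).ne
    have h4 : ((u2n : ℝ≥0∞)).toReal ≤ (μ ω A).toReal := ENNReal.toReal_mono hne h2.le
    rw [ENNReal.coe_toReal, hu2ndef, Real.coe_toNNReal _ hu20] at h4
    have h5 : u2 ≤ Y ω := h4
    simp only [Set.mem_setOf_eq, not_le]
    linarith
  have hbadP : P {ω | ¬ Y ω ≤ b} = 0 := (ae_iff (μ := P)).mp hYleb
  have hfinal : P {ω | (⟨μ ω, hμ.2.1 ω⟩ : ProbabilityMeasure S) ∈ U} ≤ P {ω | ¬ Y ω ≤ b} := measure_mono hsub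
  rw [hbadP] at hfinal
  exact absurd (lt_of_lt_of_le hpos hfinal) (lt_irrefl 0)

end
end

section
/- Let F be a countable family of measurable maps f : S → S, let G = {A ∈ B : f⁻¹(A) = A for every f ∈ F} be the σ-field of F-invariant sets, and suppose ν is F-invariant, i.e. ν = ν ∘ f⁻¹ for every f ∈ F. Suppose X satisfies condition (1.1) with a kernel K that is an r.c.d. for ν given this G (so X ∈ L). Then P(μ ∈ I) = 1, where I = {λ ∈ P(S) : λ = λ ∘ f⁻¹ for every f ∈ F} is the set of F-invariant probability measures; equivalently, almost surely μ ∘ f⁻¹ = μ for every f ∈ F. -/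
open MeasureTheory ProbabilityTheory Filter Set ENNReal NNReal

noncomputable section

variable {Ω S : Type*}

/-- The π-system generated by a countable family is countable. -/
lemma countable_generatePiSystem_aux {α : Type*} {b : Set (Set α)} (hb : b.Countable) :
    (generatePiSystem b).Countable := by
  have hsub : generatePiSystem b ⊆ Set.sInter '' {t | Set.Finite t ∧ t ⊆ b} := by
    intro s hs
    induction hs with
    | base h_s => exact ⟨{_}, ⟨Set.finite_singleton _, by simpa using h_s⟩, by simp⟩
    | inter h_s h_t h_nonempty ihs iht =>
      obtain ⟨ts, ⟨hts_fin, hts_sub⟩, rfl⟩ := ihs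
      obtain ⟨tt, ⟨htt_fin, htt_sub⟩, rfl⟩ := iht
      exact ⟨ts ∪ tt, ⟨hts_fin.union htt_fin, Set.union_subset hts_sub htt_sub⟩,
        (Set.sInter_union ts tt)⟩
  exact ((Set.countable_setOf_finite_subset hb).image _).mono hsub

theorem stmt_19 {Ω S ι : Type*} [MeasurableSpace Ω] [mS : MeasurableSpace S]
    [StandardBorelSpace S] [Countable ι]
    (f : ι → S → S) (hf : ∀ i, Measurable (f i))
    (P : Measure Ω) [IsProbabilityMeasure P] (X : ℕ → Ω → S) (ν : Measure S)
    [IsProbabilityMeasure ν] (θ : ℝ) (hθ : 0 < θ) (K : S → Measure S)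
    (hinv : ∀ i, ν.map (f i) = ν)
    (h11 : Cond11 P X ν θ K) (hK : IsRCD (mS := mS) ν K (invariantSigma f))
    (μ : Ω → Measure S) (hμ : IsDirecting P X μ) :
    P {ω | ∀ i, (μ ω).map (f i) = μ ω} = 1 := by
  classical
  obtain ⟨hXmeas, hX0, hcond⟩ := h11
  obtain ⟨hGle, hKmeas, hKprob, hKGmeas, hKrcd⟩ := hK
  -- the filtration is below the ambient σ-algebra
  have hle : ∀ n, Filtr X n ≤ ‹MeasurableSpace Ω› :=
    fun n => iSup_le fun i => measurable_iff_comap_le.1 (hXmeas i)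
  have hKA_meas : ∀ {A : Set S}, MeasurableSet A → Measurable fun x => K x A :=
    fun hA => (Measure.measurable_coe hA).comp hKmeas
  have hKle_one : ∀ x A, K x A ≤ 1 := fun x A => by
    haveI := hKprob x; exact prob_le_one
  have huniv : MeasurableSet[invariantSigma f] (univ : Set S) :=
    ⟨MeasurableSet.univ, fun i => preimage_univ⟩
  have hKint : ∀ A : Set S, MeasurableSet A → ∫⁻ x, K x A ∂ν = ν A := by
    intro A hA
    have h := hKrcd A hA univ huniv
    rw [Measure.restrict_univ, inter_univ] at h
    exact h.symm
  -- each X n has law ν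
  have hlaw : ∀ n, P.map (X n) = ν := by
    intro n
    induction n using Nat.strong_induction_on with
    | _ n ih =>
      match n with
      | 0 => exact hX0
      | (m+1) =>
        refine Measure.ext fun A hA => ?_
        rw [Measure.map_apply (hXmeas _) hA]
        have hsetm : MeasurableSet (X (m+1) ⁻¹' A) := (hXmeas _) hA
        have hce := hcond (m+1) (Nat.succ_le_succ (Nat.zero_le m)) A hA
        have hint_i : ∀ i : ℕ, Integrable (fun ω => (K (X i ω) A).toReal) P := by
          intro i
          refine ⟨((ENNReal.measurable_toReal.comp
            ((Measure.measurable_coe hA).comp (hKmeas.comp (hXmeas i))))).aestronglyMeasurable,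
            HasFiniteIntegral.of_bounded (C := 1) (ae_of_all _ fun ω => ?_)⟩
          rw [Real.norm_eq_abs, abs_of_nonneg ENNReal.toReal_nonneg]
          exact ENNReal.toReal_le_of_le_ofReal one_pos.le (by simpa using hKle_one (X i ω) A)
        have hKlaw : ∀ i : ℕ, i < m+1 → ∫ ω, (K (X i ω) A).toReal ∂P = (ν A).toReal := by
          intro i hi
          have h1 : ∫ x, (K x A).toReal ∂(P.map (X i)) = ∫ ω, (K (X i ω) A).toReal ∂P :=
            integral_map (f := fun x => (K x A).toReal) (hXmeas i).aemeasurable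
              ((ENNReal.measurable_toReal.comp (hKA_meas hA)).aestronglyMeasurable)
          rw [← h1, ih i hi, integral_toReal ((hKA_meas hA).aemeasurable)
            (ae_of_all _ fun x => lt_of_le_of_lt (hKle_one x A) one_lt_top), hKint A hA]
        have hpred_int : ∫ ω, predReal X ν θ K (m+1) ω A ∂P = (ν A).toReal := by
          simp only [predReal]
          rw [integral_div]
          have hsum_int : Integrable
              (fun ω => ∑ i ∈ Finset.range (m+1), (K (X i ω) A).toReal) P :=
            integrable_finset_sum _ fun i _ => hint_i i
          rw [integral_add (integrable_const _) hsum_int, integral_const,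
            integral_finset_sum _ (fun i _ => hint_i i)]
          have : ∀ i ∈ Finset.range (m+1), ∫ ω, (K (X i ω) A).toReal ∂P = (ν A).toReal :=
            fun i hi => hKlaw i (Finset.mem_range.1 hi)
          rw [Finset.sum_congr rfl this, Finset.sum_const, Finset.card_range]
          have hne : ((m+1 : ℕ) : ℝ) + θ ≠ 0 := by positivity
          simp only [Measure.real, measure_univ, ENNReal.toReal_one, one_smul, nsmul_eq_mul]
          field_simp
          ring
        have heq : (P (X (m+1) ⁻¹' A)).toReal = (ν A).toReal := by
          have hi1 : ∫ ω, (P[((X (m+1)) ⁻¹' A).indicator (fun _ => (1:ℝ)) | Filtr X (m+1)]) ω ∂P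
              = (P (X (m+1) ⁻¹' A)).toReal := by
            rw [integral_condExp (hle (m+1)), integral_indicator_const (1:ℝ) hsetm, smul_eq_mul,
              mul_one, Measure.real]
          rw [← hi1, integral_congr_ae hce, hpred_int]
        exact (ENNReal.toReal_eq_toReal_iff' (measure_ne_top P _) (measure_ne_top ν _)).1 heq
  -- main step: for each i and measurable A, μ ω (f i ⁻¹' A) = μ ω A a.s.
  have main : ∀ (i : ι) (A : Set S), MeasurableSet A →
      ∀ᵐ ω ∂P, μ ω (f i ⁻¹' A) = μ ω A := by
    intro i0 A hA
    set B : Set S := f i0 ⁻¹' A with hBdef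
    have hB : MeasurableSet B := (hf i0) hA
    have hνBA : ν B = ν A := by
      conv_rhs => rw [← hinv i0]
      rw [Measure.map_apply (hf i0) hA]
    -- kernel invariance ν-a.e.
    have hKinv : ∀ᵐ x ∂ν, K x B = K x A := by
      have hmg1 : Measurable[invariantSigma f] fun x => K x B := hKGmeas B hB
      have hmg2 : Measurable[invariantSigma f] fun x => K x A := hKGmeas A hA
      have key : ∀ g : Set S, MeasurableSet[invariantSigma f] g →
          ∫⁻ x in g, K x B ∂ν = ∫⁻ x in g, K x A ∂ν := by
        intro g hg
        obtain ⟨hgm, hgi⟩ := hg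
        rw [← hKrcd B hB g ⟨hgm, hgi⟩, ← hKrcd A hA g ⟨hgm, hgi⟩]
        have hBg : B ∩ g = f i0 ⁻¹' (A ∩ g) := by rw [preimage_inter, hgi i0]
        rw [hBg, ← Measure.map_apply (hf i0) (hA.inter hgm), hinv i0]
      have trans1 : ∀ (h : S → ℝ≥0∞), Measurable[invariantSigma f] h →
          ∀ g : Set S, MeasurableSet[invariantSigma f] g →
          ∫⁻ x in g, h x ∂(ν.trim hGle) = ∫⁻ x in g, h x ∂ν := by
        intro h hh g hg
        rw [← lintegral_indicator hg, ← lintegral_indicator (hGle g hg),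
          lintegral_trim hGle (hh.indicator hg)]
      have htrimeq : (fun x => K x B) =ᵐ[ν.trim hGle] fun x => K x A := by
        refine ae_eq_of_forall_setLIntegral_eq_of_sigmaFinite hmg1 hmg2 ?_
        intro s hs _
        rw [trans1 _ hmg1 s hs, trans1 _ hmg2 s hs]
        exact key s hs
      exact ae_eq_of_ae_eq_trim htrimeq
    -- transfer to the X's
    have hNmeas : MeasurableSet {x | K x B = K x A} :=
      MeasureTheory.StronglyMeasurable.measurableSet_eq_fun
        (Measurable.stronglyMeasurable (hKA_meas hB))
        (Measurable.stronglyMeasurable (hKA_meas hA))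
    have hXK : ∀ᵐ ω ∂P, ∀ j : ℕ, K (X j ω) B = K (X j ω) A := by
      rw [ae_all_iff]
      intro j
      have h0 : P (X j ⁻¹' {x | K x B = K x A}ᶜ) = 0 := by
        rw [← Measure.map_apply (hXmeas j) hNmeas.compl, hlaw j]
        simpa [ae_iff, Set.compl_def] using hKinv
      refine measure_mono_null (fun ω hω => ?_) h0
      simpa using hω
    -- the martingale differences
    set Y : ℕ → Ω → ℝ := fun n ω => (X n ⁻¹' B).indicator (fun _ => (1:ℝ)) ω
      - (X n ⁻¹' A).indicator (fun _ => (1:ℝ)) ω with hYdef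
    have hYcomp : ∀ n ω, Y n ω = B.indicator (fun _ => (1:ℝ)) (X n ω)
        - A.indicator (fun _ => (1:ℝ)) (X n ω) := by
      intro n ω
      simp [hYdef, Set.indicator_apply, Set.mem_preimage]
    have hgmeas : Measurable (fun s => B.indicator (fun _ => (1:ℝ)) s
        - A.indicator (fun _ => (1:ℝ)) s) :=
      (measurable_const.indicator hB).sub (measurable_const.indicator hA)
    have hYmeas : ∀ n, Measurable (Y n) := fun n =>
      (measurable_const.indicator ((hXmeas n) hB)).sub
        (measurable_const.indicator ((hXmeas n) hA))
    have hYbdd : ∀ n ω, |Y n ω| ≤ 1 := by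
      intro n ω
      simp only [hYdef]
      by_cases h1 : ω ∈ X n ⁻¹' B <;> by_cases h2 : ω ∈ X n ⁻¹' A <;>
        simp [h1, h2]
    have hYint : ∀ n, Integrable (Y n) P := fun n =>
      ⟨(hYmeas n).aestronglyMeasurable, HasFiniteIntegral.of_bounded (C := 1)
        (ae_of_all _ fun ω => by rw [Real.norm_eq_abs]; exact hYbdd n ω)⟩
    have hYsm : ∀ i n : ℕ, i < n → StronglyMeasurable[Filtr X n] (Y i) := by
      intro i n hi
      have hXi : Measurable[Filtr X n] (X i) := by
        have h1 : @Measurable Ω S (mS.comap (X i)) mS (X i) := measurable_iff_comap_le.2 le_rfl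
        exact h1.mono (le_iSup (fun j : Fin n => mS.comap (X (j : ℕ))) ⟨i, hi⟩) le_rfl
      have hmeasi : Measurable[Filtr X n] (Y i) := by
        have heq : Y i = fun ω => (B.indicator (fun _ => (1:ℝ)) (X i ω)
            - A.indicator (fun _ => (1:ℝ)) (X i ω)) := funext fun ω => hYcomp i ω
        rw [heq]
        exact hgmeas.comp hXi
      exact hmeasi.stronglyMeasurable
    have hYcond : ∀ n, 1 ≤ n → P[Y n | Filtr X n] =ᵐ[P] fun _ => (0:ℝ) := by
      intro n hn
      have hintB : Integrable ((X n ⁻¹' B).indicator fun _ => (1:ℝ)) P :=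
        (integrable_const 1).indicator ((hXmeas n) hB)
      have hintA : Integrable ((X n ⁻¹' A).indicator fun _ => (1:ℝ)) P :=
        (integrable_const 1).indicator ((hXmeas n) hA)
      have hsub : P[Y n | Filtr X n] =ᵐ[P]
          P[(X n ⁻¹' B).indicator fun _ => (1:ℝ) | Filtr X n]
            - P[(X n ⁻¹' A).indicator fun _ => (1:ℝ) | Filtr X n] :=
        condExp_sub hintB hintA _
      have h1 := hcond n hn B hB
      have h2 := hcond n hn A hA
      have hpred_eq : ∀ᵐ ω ∂P, predReal X ν θ K n ω B = predReal X ν θ K n ω A := by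
        filter_upwards [hXK] with ω hω
        have hsumeq : ∑ j ∈ Finset.range n, (K (X j ω) B).toReal
            = ∑ j ∈ Finset.range n, (K (X j ω) A).toReal :=
          Finset.sum_congr rfl fun j _ => by rw [hω j]
        simp only [predReal, hνBA, hsumeq]
      filter_upwards [hsub, h1, h2, hpred_eq] with ω hω hω1 hω2 hω3
      simp only [Pi.sub_apply] at hω
      rw [hω, hω1, hω2, hω3, sub_self]
    have hprod_int : ∀ i j : ℕ, Integrable (fun ω => Y i ω * Y j ω) P := by
      intro i j
      refine ⟨((hYmeas i).mul (hYmeas j)).aestronglyMeasurable,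
        HasFiniteIntegral.of_bounded (C := 1) (ae_of_all _ fun ω => ?_)⟩
      rw [Real.norm_eq_abs, abs_mul]
      nlinarith [hYbdd i ω, hYbdd j ω, abs_nonneg (Y i ω), abs_nonneg (Y j ω)]
    have horth : ∀ i j : ℕ, i < j → ∫ ω, Y i ω * Y j ω ∂P = 0 := by
      intro i j hij
      have hpull : P[Y i * Y j | Filtr X j] =ᵐ[P] Y i * P[Y j | Filtr X j] :=
        condExp_mul_of_stronglyMeasurable_left (hYsm i j hij) (hprod_int i j) (hYint j)
      have h0 := hYcond j (Nat.one_le_iff_ne_zero.2 (by omega))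
      have hze : P[Y i * Y j | Filtr X j] =ᵐ[P] fun _ => (0:ℝ) := by
        filter_upwards [hpull, h0] with ω hω1 hω2
        rw [hω1, Pi.mul_apply, hω2, mul_zero]
      calc ∫ ω, Y i ω * Y j ω ∂P
          = ∫ ω, (P[Y i * Y j | Filtr X j]) ω ∂P := (integral_condExp (hle j)).symm
        _ = ∫ _ω, (0:ℝ) ∂P := integral_congr_ae hze
        _ = 0 := integral_zero _ _
    -- second moments
    set Sn : ℕ → Ω → ℝ := fun n ω => ∑ k ∈ Finset.range n, Y k ω with hSndef
    have hSnmeas : ∀ n, Measurable (Sn n) := fun n =>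
      Finset.measurable_sum _ fun k _ => hYmeas k
    have hSvar : ∀ n : ℕ, ∫ ω, (Sn n ω)^2 ∂P ≤ (n : ℝ) := by
      intro n
      have hexp : ∀ ω, (Sn n ω)^2
          = ∑ i ∈ Finset.range n, ∑ j ∈ Finset.range n, Y i ω * Y j ω := by
        intro ω
        rw [sq]
        simp only [hSndef]
        exact Finset.sum_mul_sum _ _ _ _
      have h1 : ∫ ω, (Sn n ω)^2 ∂P
          = ∑ i ∈ Finset.range n, ∑ j ∈ Finset.range n, ∫ ω, Y i ω * Y j ω ∂P := by
        rw [integral_congr_ae (ae_of_all _ hexp),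
          integral_finset_sum _ (fun i _ => integrable_finset_sum _ fun j _ => hprod_int i j)]
        exact Finset.sum_congr rfl fun i _ => integral_finset_sum _ fun j _ => hprod_int i j
      have h2 : ∀ i ∈ Finset.range n,
          ∑ j ∈ Finset.range n, ∫ ω, Y i ω * Y j ω ∂P = ∫ ω, Y i ω * Y i ω ∂P := by
        intro i hi
        refine Finset.sum_eq_single_of_mem i hi (fun j hj hne => ?_)
        rcases lt_or_gt_of_ne hne with h | h
        · rw [integral_congr_ae (ae_of_all _ fun ω => mul_comm (Y i ω) (Y j ω))]
          exact horth j i h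
        · exact horth i j h
      have h3 : ∀ i : ℕ, ∫ ω, Y i ω * Y i ω ∂P ≤ 1 := by
        intro i
        have hb : ∀ ω, Y i ω * Y i ω ≤ 1 := fun ω => by
          nlinarith [abs_le.1 (hYbdd i ω)]
        calc ∫ ω, Y i ω * Y i ω ∂P ≤ ∫ _ω, (1:ℝ) ∂P :=
              integral_mono (hprod_int i i) (integrable_const 1) hb
          _ = 1 := by simp
      calc ∫ ω, (Sn n ω)^2 ∂P
          = ∑ i ∈ Finset.range n, ∑ j ∈ Finset.range n, ∫ ω, Y i ω * Y j ω ∂P := h1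
        _ = ∑ i ∈ Finset.range n, ∫ ω, Y i ω * Y i ω ∂P := Finset.sum_congr rfl h2
        _ ≤ ∑ _i ∈ Finset.range n, (1:ℝ) := Finset.sum_le_sum fun i _ => h3 i
        _ = n := by simp
    -- a.s. convergence of Sn n / n
    set L : Ω → ℝ := fun ω => (μ ω B).toReal - (μ ω A).toReal with hLdef
    have htendL : ∀ᵐ ω ∂P, Tendsto (fun n : ℕ => Sn n ω / n) atTop (nhds (L ω)) := by
      filter_upwards [hμ.2.2 B hB, hμ.2.2 A hA] with ω h1 h2
      have heq : (fun n : ℕ => Sn n ω / n)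
          = fun n : ℕ => (∑ k ∈ Finset.range n, B.indicator (fun _ => (1:ℝ)) (X k ω)) / n
            - (∑ k ∈ Finset.range n, A.indicator (fun _ => (1:ℝ)) (X k ω)) / n := by
        funext n
        have : Sn n ω = (∑ k ∈ Finset.range n, B.indicator (fun _ => (1:ℝ)) (X k ω))
            - ∑ k ∈ Finset.range n, A.indicator (fun _ => (1:ℝ)) (X k ω) := by
          simp only [hSndef]
          rw [← Finset.sum_sub_distrib]
          exact Finset.sum_congr rfl fun k _ => hYcomp k ω
        rw [this]; ring
      rw [heq, hLdef]
      exact h1.sub h2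
    -- Fatou argument forces L = 0 a.s.
    have hSbdd : ∀ (n : ℕ) ω, |Sn n ω| ≤ n := by
      intro n ω
      simp only [hSndef]
      calc |∑ k ∈ Finset.range n, Y k ω| ≤ ∑ k ∈ Finset.range n, |Y k ω| :=
            Finset.abs_sum_le_sum_abs _ _
        _ ≤ ∑ _k ∈ Finset.range n, (1:ℝ) := Finset.sum_le_sum fun k _ => hYbdd k ω
        _ = n := by simp
    have hSint2 : ∀ n : ℕ, Integrable (fun ω => (Sn n ω / n)^2) P := by
      intro n
      refine ⟨(((hSnmeas n).div_const _).pow_const 2).aestronglyMeasurable,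
        HasFiniteIntegral.of_bounded (C := 1) (ae_of_all _ fun ω => ?_)⟩
      rw [Real.norm_eq_abs, abs_of_nonneg (sq_nonneg _)]
      rcases Nat.eq_zero_or_pos n with rfl | hn
      · simp [hSndef]
      · have h1 : |Sn n ω| ≤ (n:ℝ) := hSbdd n ω
        have h2 : (0:ℝ) < n := by exact_mod_cast hn
        rw [div_pow, div_le_one (by exact pow_pos h2 2)]
        nlinarith [abs_nonneg (Sn n ω), sq_abs (Sn n ω)]
    have hlint_bound : ∀ n : ℕ, 1 ≤ n →
        ∫⁻ ω, ENNReal.ofReal ((Sn n ω / n)^2) ∂P ≤ ENNReal.ofReal (1 / n) := by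
      intro n hn
      rw [← ofReal_integral_eq_lintegral_ofReal (hSint2 n) (ae_of_all _ fun ω => sq_nonneg _)]
      apply ENNReal.ofReal_le_ofReal
      have hne : (0:ℝ) < n := by exact_mod_cast hn
      have heq2 : ∫ ω, (Sn n ω / n)^2 ∂P = (∫ ω, (Sn n ω)^2 ∂P) / ((n:ℝ)^2) := by
        rw [← integral_div]
        exact integral_congr_ae (ae_of_all _ fun ω => by simp [div_pow])
      rw [heq2, div_le_div_iff₀ (by positivity) hne]
      have := hSvar n
      nlinarith [this, hne]
    have hL0 : ∀ᵐ ω ∂P, L ω = 0 := by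
      have hLmeas : Measurable L :=
        (ENNReal.measurable_toReal.comp ((Measure.measurable_coe hB).comp hμ.1)).sub
          (ENNReal.measurable_toReal.comp ((Measure.measurable_coe hA).comp hμ.1))
      have hFmeas : ∀ n : ℕ, Measurable fun ω => ENNReal.ofReal ((Sn n ω / n)^2) := fun n =>
        ENNReal.measurable_ofReal.comp (((hSnmeas n).div_const _).pow_const 2)
      have key : ∫⁻ ω, ENNReal.ofReal ((L ω)^2) ∂P = 0 := by
        have h1 : ∫⁻ ω, ENNReal.ofReal ((L ω)^2) ∂P
            = ∫⁻ ω, liminf (fun n : ℕ => ENNReal.ofReal ((Sn n ω / n)^2)) atTop ∂P := by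
          refine lintegral_congr_ae ?_
          filter_upwards [htendL] with ω hω
          exact ((ENNReal.tendsto_ofReal (hω.pow 2)).liminf_eq).symm
        have h2 := lintegral_liminf_le (μ := P) (u := atTop) hFmeas
        have h3 : liminf (fun n : ℕ => ∫⁻ ω, ENNReal.ofReal ((Sn n ω / n)^2) ∂P) atTop = 0 := by
          have htend0 : Tendsto (fun n : ℕ => ∫⁻ ω, ENNReal.ofReal ((Sn n ω / n)^2) ∂P)
              atTop (nhds 0) := by
            refine tendsto_of_tendsto_of_tendsto_of_le_of_le'
              (g := fun _ : ℕ => (0:ℝ≥0∞)) (h := fun n : ℕ => ENNReal.ofReal (1 / n))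
              tendsto_const_nhds ?_ (Eventually.of_forall fun n => zero_le) ?_
            · have h4 : Tendsto (fun n : ℕ => (1:ℝ)/n) atTop (nhds 0) :=
                tendsto_one_div_atTop_nhds_zero_nat
              simpa using ENNReal.tendsto_ofReal h4
            · filter_upwards [eventually_ge_atTop 1] with n hn
              exact hlint_bound n hn
          exact htend0.liminf_eq
        refine le_antisymm ?_ zero_le
        rw [h1]
        exact h2.trans h3.le
      have hae0 : ∀ᵐ ω ∂P, ENNReal.ofReal ((L ω)^2) = 0 :=
        (lintegral_eq_zero_iff (ENNReal.measurable_ofReal.comp (hLmeas.pow_const 2))).1 key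
      filter_upwards [hae0] with ω hω
      have h4 : (L ω)^2 ≤ 0 := by simpa [ENNReal.ofReal_eq_zero] using hω
      have h5 : (L ω)^2 = 0 := le_antisymm h4 (sq_nonneg _)
      exact pow_eq_zero_iff two_ne_zero |>.1 h5
    filter_upwards [hL0] with ω hω
    haveI := hμ.2.1 ω
    have hRe : (μ ω B).toReal = (μ ω A).toReal := by
      simp only [hLdef] at hω
      linarith
    exact (ENNReal.toReal_eq_toReal_iff' (measure_ne_top _ _) (measure_ne_top _ _)).1 hRe
  -- combine over a countable generating π-system
  obtain ⟨b, hbc, hbgen⟩ := MeasurableSpace.CountablyGenerated.isCountablyGenerated (α := S)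
  have hCgen : mS = MeasurableSpace.generateFrom (generatePiSystem b) := by
    rw [generateFrom_generatePiSystem_eq]; exact hbgen
  have hCmeas : ∀ A ∈ generatePiSystem b, MeasurableSet A := fun A hA => by
    rw [hCgen]; exact MeasurableSpace.measurableSet_generateFrom hA
  have hae : ∀ᵐ ω ∂P, ∀ i, ∀ A ∈ generatePiSystem b, μ ω (f i ⁻¹' A) = μ ω A := by
    rw [ae_all_iff]
    intro i
    rw [ae_ball_iff (countable_generatePiSystem_aux hbc)]
    intro A hA
    exact main i A (hCmeas A hA)
  have hfinal : ∀ᵐ ω ∂P, ∀ i, (μ ω).map (f i) = μ ω := by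
    filter_upwards [hae] with ω hω i
    haveI := hμ.2.1 ω
    haveI : IsProbabilityMeasure ((μ ω).map (f i)) := Measure.isProbabilityMeasure_map (hf i).aemeasurable
    refine MeasureTheory.ext_of_generate_finite (generatePiSystem b) hCgen
      (isPiSystem_generatePiSystem b) (fun s hs => ?_) ?_
    · rw [Measure.map_apply (hf i) (hCmeas s hs)]
      exact hω i s hs
    · simp
  have h0 : P {ω | ¬ ∀ i, (μ ω).map (f i) = μ ω} = 0 := by
    simpa [ae_iff] using hfinal
  refine le_antisymm prob_le_one ?_
  have huniv2 : {ω | ∀ i, (μ ω).map (f i) = μ ω} ∪ {ω | ¬ ∀ i, (μ ω).map (f i) = μ ω}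
      = (univ : Set Ω) := by
    ext ω
    simp only [Set.mem_union, Set.mem_setOf_eq, Set.mem_univ, iff_true]
    exact em _
  calc (1:ℝ≥0∞) = P univ := measure_univ.symm
    _ = P ({ω | ∀ i, (μ ω).map (f i) = μ ω} ∪ {ω | ¬ ∀ i, (μ ω).map (f i) = μ ω}) := by
        rw [huniv2]
    _ ≤ P {ω | ∀ i, (μ ω).map (f i) = μ ω} + P {ω | ¬ ∀ i, (μ ω).map (f i) = μ ω} :=
        measure_union_le _ _
    _ = P {ω | ∀ i, (μ ω).map (f i) = μ ω} := by rw [h0, add_zero]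


end
end
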